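/- arXiv:2505.01268 — 5 statements merged into one kernel-verified Lean document; each statement's English description precedes it below -/
import Mathlib

section
/- Every finitely generated FC-group, equipped with the word metric of a finite generating set, has finite asymptotic dimension. -/
open Metric Set Function

namespace APC

variable {X Y : Type*}

/-- A family `𝒰` of subsets of a metric space is `r`-disjoint if any two distinct members
are at distance at least `r`. -/
def RDisjoint [MetricSpace X] (r : ℝ) (𝒰 : Set (Set X)) : Prop :=
  ∀ U ∈ 𝒰, ∀ V ∈ 𝒰, U ≠ V → ∀ x ∈ U, ∀ y ∈ V, r ≤ dist x y

/-- A family `𝒰` is `R`-bounded if every member has diameter at most `R`. -/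
def RBounded [MetricSpace X] (R : ℝ) (𝒰 : Set (Set X)) : Prop :=
  ∀ U ∈ 𝒰, ∀ x ∈ U, ∀ y ∈ U, dist x y ≤ R

/-- A family is uniformly bounded if it is `R`-bounded for some `R > 0`. -/
def UnifBounded [MetricSpace X] (𝒰 : Set (Set X)) : Prop :=
  ∃ R : ℝ, 0 < R ∧ RBounded R 𝒰

/-- `asdim X ≤ n`. -/
def AsdimLE (X : Type*) [MetricSpace X] (n : ℕ) : Prop :=
  ∀ r : ℝ, 0 < r → ∃ 𝒰 : Fin (n + 1) → Set (Set X),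
    (∀ i, UnifBounded (𝒰 i)) ∧ (∀ i, RDisjoint r (𝒰 i)) ∧ (⋃ i, ⋃₀ 𝒰 i) = Set.univ

/-- `X` has finite asymptotic dimension. -/
def HasFiniteAsdim (X : Type*) [MetricSpace X] : Prop := ∃ n : ℕ, AsdimLE X n

/-- Asymptotic property C. -/
def HasAPC (X : Type*) [MetricSpace X] : Prop :=
  ∀ R : ℕ → ℝ, (∀ i, 0 < R i) → StrictMono R →
    ∃ n : ℕ, ∃ 𝒰 : Fin (n + 1) → Set (Set X),
      (∀ i, UnifBounded (𝒰 i)) ∧ (∀ i : Fin (n + 1), RDisjoint (R i) (𝒰 i)) ∧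
      (⋃ i, ⋃₀ 𝒰 i) = Set.univ

/-- `M^a`, the derivative of a collection of finite nonempty subsets of `ℕ`. -/
def deriv (M : Set (Finset ℕ)) (a : ℕ) : Set (Finset ℕ) :=
  {τ | τ.Nonempty ∧ a ∉ τ ∧ insert a τ ∈ M}

/-- `OrdLE α M` means `Ord M ≤ α` in the sense of Radul: either `M = ∅`
(so that `Ord M = 0`), or `Ord M^a < α` for every `a : ℕ`.  Defined by
well-founded recursion on the ordinal `α`. -/
def OrdLE : Ordinal.{0} → Set (Finset ℕ) → Prop :=
  Ordinal.lt_wf.fix (C := fun _ => Set (Finset ℕ) → Prop)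
    (fun α IH M => M = ∅ ∨ ∀ a : ℕ, ∃ β : Ordinal.{0}, ∃ hβ : β < α, IH β hβ (deriv M a))

/-- The collection `A(X,d)` of finite nonempty subsets `σ ⊆ ℕ` such that there is no
covering of `X` by uniformly bounded families `𝒰ᵢ` (`i ∈ σ`), each `i`-disjoint. -/
def AClass (X : Type*) [MetricSpace X] : Set (Finset ℕ) :=
  {σ | σ.Nonempty ∧ ¬ ∃ 𝒰 : ℕ → Set (Set X),
      (∀ i ∈ σ, UnifBounded (𝒰 i)) ∧ (∀ i ∈ σ, RDisjoint (i : ℝ) (𝒰 i)) ∧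
      (⋃ i ∈ σ, ⋃₀ 𝒰 i) = Set.univ}

/-- `trasdim X ≤ α`. -/
def TrasdimLE (X : Type*) [MetricSpace X] (α : Ordinal.{0}) : Prop :=
  OrdLE α (AClass X)

/-- The `(m,n)`-DTUT property: disjointness of the `(m,n)`-tiling through uniform
translation. -/
def DTUT (X : Type*) [MetricSpace X] (m n : ℕ) : Prop :=
  ∃ F : Fin m → ℕ,
    ∀ h : ℕ+ → ℕ+, ∀ k : Fin (m + 1) → ℕ+, StrictMono k →
      ∃ C : (Fin m → ℕ+) → Fin (n + 1) → Set (Set X),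
      ∃ D : (Fin m → ℕ+) → (i : Fin m) → Fin (F i + 1) → Set (Set X),
        ∀ l : Fin m → ℕ+, (∀ r : Fin m, l r ≤ h (k r.succ)) →
          ((∀ j, UnifBounded (C l j)) ∧
           (∀ i s, UnifBounded (D l i s)) ∧
           (∀ j, RDisjoint ((k 0 : ℕ) : ℝ) (C l j)) ∧
           (∀ (i : Fin m) (s : Fin (F i + 1)), RDisjoint ((k i.succ : ℕ) : ℝ) (D l i s)) ∧
           ((⋃ j, ⋃₀ C l j) ∪ (⋃ i, ⋃ s, ⋃₀ D l i s) = Set.univ)) ∧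
          (∀ (i : Fin m) (s : Fin (F i + 1)),
            (∀ t : ℕ+, t ≤ h (k i.succ) →
              (⋃₀ D (Function.update l i t) i s).Nonempty) ∧
            (∀ t t' : ℕ+, t ≤ h (k i.succ) → t' ≤ h (k i.succ) → t ≠ t' →
              Disjoint (⋃₀ D (Function.update l i t) i s)
                (⋃₀ D (Function.update l i t') i s)) ∧
            RDisjoint ((k i.succ : ℕ) : ℝ)
              (⋃ t ∈ {t : ℕ+ | t ≤ h (k i.succ)}, D (Function.update l i t) i s))

/-- The word length of `g` with respect to the symmetrized generating set `S ∪ S⁻¹`. -/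
noncomputable def wordLength {G : Type*} [Group G] (S : Set G) (g : G) : ℕ :=
  sInf {n : ℕ | ∃ L : List G, (∀ x ∈ L, x ∈ S ∨ x⁻¹ ∈ S) ∧ L.prod = g ∧ L.length = n}

/-- A group is FC if every conjugacy class is finite. -/
def IsFCGroup (G : Type*) [Group G] : Prop :=
  ∀ x : G, Set.Finite {y : G | ∃ g : G, g * x * g⁻¹ = y}

/-- A metric on a countable discrete space is proper if every ball is finite. -/
def ProperMet (X : Type*) [MetricSpace X] : Prop :=
  ∀ (x : X) (R : ℝ), (Metric.closedBall x R).Finite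

/-- Left invariance of a metric on a group. -/
def LeftInvariant (G : Type*) [Group G] [MetricSpace G] : Prop :=
  ∀ g x y : G, dist (g * x) (g * y) = dist x y

/-- Bornologous maps. -/
def Bornologous [MetricSpace X] [MetricSpace Y] (f : X → Y) : Prop :=
  ∀ R : ℝ, 0 < R → ∃ P : ℝ, 0 < P ∧ ∀ x y : X, dist x y < R → dist (f x) (f y) < P

/-- Coarse embeddings. -/
def CoarseEmbedding [MetricSpace X] [MetricSpace Y] (f : X → Y) : Prop :=
  ∃ ρminus ρplus : ℝ → ℝ, Monotone ρminus ∧ Monotone ρplus ∧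
    Filter.Tendsto ρminus Filter.atTop Filter.atTop ∧
    (∀ x y : X, ρminus (dist x y) ≤ dist (f x) (f y) ∧ dist (f x) (f y) ≤ ρplus (dist x y))

/-- Coarse equivalences: coarse embeddings with coarsely dense image. -/
def CoarseEquiv [MetricSpace X] [MetricSpace Y] (f : X → Y) : Prop :=
  CoarseEmbedding f ∧ ∃ C : ℝ, 0 < C ∧ ∀ y : Y, ∃ x : X, dist y (f x) ≤ C


/-! ### Auxiliary lemmas -/

section WordLengthAux

variable {G : Type*} [Group G] {S : Set G}

theorem wl_set_nonempty (hgen : Subgroup.closure S = ⊤) (g : G) :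
    {n : ℕ | ∃ L : List G, (∀ x ∈ L, x ∈ S ∨ x⁻¹ ∈ S) ∧ L.prod = g ∧ L.length = n}.Nonempty := by
  have hg : g ∈ (Subgroup.closure S).toSubmonoid := by
    rw [hgen]; trivial
  rw [Subgroup.closure_toSubmonoid] at hg
  obtain ⟨L, hL, hprod⟩ := Submonoid.exists_list_of_mem_closure hg
  exact ⟨L.length, L, fun x hx => by
    rcases hL x hx with h | h
    · exact Or.inl h
    · exact Or.inr (Set.mem_inv.mp h), hprod, rfl⟩

theorem exists_wl_list (hgen : Subgroup.closure S = ⊤) (g : G) :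
    ∃ L : List G, (∀ x ∈ L, x ∈ S ∨ x⁻¹ ∈ S) ∧ L.prod = g ∧ L.length = wordLength S g :=
  Nat.sInf_mem (wl_set_nonempty hgen g)

theorem wl_le_of_list {g : G} (L : List G) (hL : ∀ x ∈ L, x ∈ S ∨ x⁻¹ ∈ S)
    (hprod : L.prod = g) : wordLength S g ≤ L.length :=
  Nat.sInf_le ⟨L, hL, hprod, rfl⟩

theorem wl_one : wordLength S (1 : G) = 0 :=
  Nat.le_zero.mp (wl_le_of_list ([] : List G) (by simp) (by simp))

theorem wl_mul_le (hgen : Subgroup.closure S = ⊤) (x y : G) :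
    wordLength S (x * y) ≤ wordLength S x + wordLength S y := by
  obtain ⟨L1, h1, p1, l1⟩ := exists_wl_list hgen x
  obtain ⟨L2, h2, p2, l2⟩ := exists_wl_list hgen y
  calc wordLength S (x * y) ≤ (L1 ++ L2).length := by
        refine wl_le_of_list _ (fun z hz => ?_) (by simp [p1, p2])
        rcases List.mem_append.mp hz with h | h
        exacts [h1 z h, h2 z h]
    _ = wordLength S x + wordLength S y := by simp [l1, l2]

theorem wl_inv_le (hgen : Subgroup.closure S = ⊤) (x : G) :
    wordLength S x⁻¹ ≤ wordLength S x := by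
  obtain ⟨L, h, p, l⟩ := exists_wl_list hgen x
  calc wordLength S x⁻¹ ≤ ((L.map Inv.inv).reverse).length := by
        refine wl_le_of_list _ (fun z hz => ?_) ?_
        · simp only [List.mem_reverse, List.mem_map] at hz
          obtain ⟨w, hw, rfl⟩ := hz
          rcases h w hw with h' | h'
          · exact Or.inr (by simpa using h')
          · exact Or.inl h'
        · rw [← List.prod_inv_reverse, p]
    _ = wordLength S x := by simp [l]

theorem wl_zpow_le (hgen : Subgroup.closure S = ⊤) (x : G) (m : ℤ) :
    wordLength S (x ^ m) ≤ m.natAbs * wordLength S x := by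
  have hnat : ∀ k : ℕ, wordLength S (x ^ k) ≤ k * wordLength S x := by
    intro k
    induction k with
    | zero => simp [wl_one]
    | succ k ih =>
        calc wordLength S (x ^ (k + 1)) = wordLength S (x ^ k * x) := by rw [pow_succ]
          _ ≤ wordLength S (x ^ k) + wordLength S x := wl_mul_le hgen _ _
          _ ≤ k * wordLength S x + wordLength S x := by omega
          _ = (k + 1) * wordLength S x := by ring
  rcases Int.natAbs_eq m with h | h
  · rw [h, zpow_natCast]; exact hnat _
  · rw [h]
    calc wordLength S (x ^ (-(m.natAbs : ℤ)))
        = wordLength S ((x ^ (m.natAbs : ℤ))⁻¹) := by rw [← zpow_neg]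
      _ ≤ wordLength S (x ^ (m.natAbs : ℤ)) := wl_inv_le hgen _
      _ = wordLength S (x ^ m.natAbs) := by rw [zpow_natCast]
      _ ≤ m.natAbs * wordLength S x := hnat _
      _ = (-(m.natAbs:ℤ)).natAbs * wordLength S x := by rw [Int.natAbs_neg, Int.natAbs_natCast]

theorem wl_ball_finite (S : Finset G) (hgen : Subgroup.closure (S : Set G) = ⊤) (N : ℕ) :
    {g : G | wordLength (S : Set G) g ≤ N}.Finite := by
  classical
  set T : Finset G := S ∪ S.image (fun x => x⁻¹) with hT
  have hTfin : (T : Set G).Finite := T.finite_toSet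
  have : {g : G | wordLength (S : Set G) g ≤ N} ⊆
      List.prod '' (List.map (Subtype.val : {x : G // x ∈ (T : Set G)} → G) ''
        {l : List {x : G // x ∈ (T : Set G)} | l.length ≤ N}) := by
    intro g hg
    obtain ⟨L, hL, hprod, hlen⟩ := exists_wl_list hgen g
    have hmem : ∀ x ∈ L, x ∈ (T : Set G) := by
      intro x hx
      rcases hL x hx with h | h
      · exact Finset.mem_coe.mpr (Finset.mem_union_left _ h)
      · refine Finset.mem_coe.mpr (Finset.mem_union_right _ ?_)
        exact Finset.mem_image.mpr ⟨x⁻¹, h, by simp⟩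
    refine ⟨L, ⟨L.attach.map (fun x => (⟨x.1, hmem x.1 x.2⟩ : {x : G // x ∈ (T : Set G)})), ?_, ?_⟩, hprod⟩
    · simp only [Set.mem_setOf_eq, List.length_map, List.length_attach]
      simp only [Set.mem_setOf_eq] at hg
      omega
    · simp [List.map_map, Function.comp]
  refine Set.Finite.subset (Set.Finite.image _ (Set.Finite.image _ ?_)) this
  have : Finite {x : G // x ∈ (T : Set G)} := hTfin
  exact List.finite_length_le _ N

end WordLengthAux

section GroupAux

open DirectSum

variable {Γ : Type*} [Group Γ]

theorem centralizer_finiteIndex (hFC : IsFCGroup Γ) (x : Γ) :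
    (Subgroup.centralizer {x}).FiniteIndex := by
  have horb : (MulAction.orbit (ConjAct Γ) x).Finite := by
    refine Set.Finite.subset (hFC x) ?_
    rintro y ⟨g, rfl⟩
    exact ⟨ConjAct.ofConjAct g, by simp [ConjAct.smul_def]⟩
  have : Finite (MulAction.orbit (ConjAct Γ) x) := horb
  have hq : Finite (ConjAct Γ ⧸ MulAction.stabilizer (ConjAct Γ) x) :=
    Finite.of_equiv _ (MulAction.orbitEquivQuotientStabilizer (ConjAct Γ) x)
  have hst : (MulAction.stabilizer (ConjAct Γ) x).FiniteIndex :=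
    ⟨Subgroup.index_ne_zero_of_finite⟩
  have hcomap := Subgroup.centralizer_eq_comap_stabilizer x
  rw [hcomap]
  constructor
  have h := Subgroup.index_comap_of_surjective (f := (ConjAct.toConjAct : Γ ≃* ConjAct Γ).toMonoidHom) (MulAction.stabilizer (ConjAct Γ) x) (fun y => ⟨ConjAct.ofConjAct y, rfl⟩)
  intro h0; apply hst.index_ne_zero; rw [← h]; exact h0

theorem center_finiteIndex (S : Finset Γ) (hgen : Subgroup.closure (S : Set Γ) = ⊤)
    (hFC : IsFCGroup Γ) : (Subgroup.center Γ).FiniteIndex := by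
  classical
  have hH : (⨅ s ∈ S, Subgroup.centralizer {s}).FiniteIndex :=
    Subgroup.finiteIndex_iInf' _ (fun s _ => centralizer_finiteIndex hFC s)
  refine Subgroup.finiteIndex_of_le (H := ⨅ s ∈ S, Subgroup.centralizer {s}) ?_
  intro x hx
  rw [Subgroup.mem_center_iff]
  intro g
  have hcl : Subgroup.closure (S : Set Γ) ≤ Subgroup.centralizer {x} := by
    rw [Subgroup.closure_le]
    intro s hs
    rw [SetLike.mem_coe, Subgroup.mem_centralizer_iff]
    have h1 := Subgroup.mem_iInf.mp (Subgroup.mem_iInf.mp hx s) hs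
    rw [Subgroup.mem_centralizer_iff] at h1
    intro h hh
    rcases hh with rfl
    exact (h1 s (Set.mem_singleton s)).symm
  have h2 : g ∈ Subgroup.centralizer {x} := hcl (hgen ▸ Subgroup.mem_top g)
  rw [Subgroup.mem_centralizer_iff] at h2
  exact (h2 x (Set.mem_singleton x)).symm

theorem abelian_decomposition (hfg : Group.FG Γ) (hZ : (Subgroup.center Γ).FiniteIndex) :
    ∃ (n : ℕ) (ι : (Fin n → ℤ) → Γ) (F : Set Γ), F.Finite ∧ Function.Injective ι ∧
      (∀ v w, ι (v + w) = ι v * ι w) ∧ ∀ g : Γ, ∃ f ∈ F, ∃ v, g = f * ι v := by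
  classical
  set Z := Subgroup.center Γ with hZdef
  haveI := hZ
  haveI : Group.FG ↥Z := Subgroup.fg_of_index_ne_zero Z
  letI : CommGroup ↥Z := open scoped IsMulCommutative in inferInstance
  haveI : AddGroup.FG (Additive ↥Z) := AddGroup.fg_of_group_fg
  obtain ⟨n, ιt, fιt, p, hp, e, ⟨φ⟩⟩ :=
    AddCommGroup.equiv_free_prod_directSum_zmod (Additive ↥Z)
  haveI : Fintype ιt := fιt
  haveI : ∀ i : ιt, NeZero (p i ^ e i) := fun i => ⟨pow_ne_zero _ (hp i).pos.ne'⟩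
  haveI : Finite (⨁ i : ιt, ZMod (p i ^ e i)) :=
    Finite.of_equiv _ (DFinsupp.equivFunOnFintype (β := fun i : ιt => ZMod (p i ^ e i))).symm
  set ι : (Fin n → ℤ) → Γ := fun v =>
    ((Additive.toMul (φ.symm (Finsupp.equivFunOnFinite.symm v, 0)) : ↥Z) : Γ) with hι
  set τ : (⨁ i : ιt, ZMod (p i ^ e i)) → Γ := fun d =>
    ((Additive.toMul (φ.symm (0, d)) : ↥Z) : Γ) with hτ
  set Rset : Set Γ := Set.range (fun q : Γ ⧸ Z => (Quotient.out q : Γ)) with hR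
  refine ⟨n, ι, Set.image2 (· * ·) Rset (Set.range τ),
    Set.Finite.image2 _ (Set.finite_range _) (Set.finite_range _), ?_, ?_, ?_⟩
  · intro v w h
    have h2 : (Additive.toMul (φ.symm (Finsupp.equivFunOnFinite.symm v, 0)) : ↥Z)
        = (Additive.toMul (φ.symm (Finsupp.equivFunOnFinite.symm w, 0)) : ↥Z) :=
      Subtype.coe_injective h
    have h3 := φ.symm.injective (Additive.toMul.injective h2)
    have h4 : Finsupp.equivFunOnFinite.symm v = Finsupp.equivFunOnFinite.symm w :=
      (Prod.mk.injEq _ _ _ _).mp h3 |>.1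
    exact Finsupp.equivFunOnFinite.symm.injective h4
  · intro v w
    have : φ.symm (Finsupp.equivFunOnFinite.symm (v + w), 0)
        = φ.symm (Finsupp.equivFunOnFinite.symm v, 0) +
          φ.symm (Finsupp.equivFunOnFinite.symm w, 0) := by
      rw [← map_add]
      congr 1
      rw [Prod.mk_add_mk, add_zero]
      congr 1
      ext i
      simp
    simp only [hι, this, toMul_add]
    rfl
  · intro g
    set q : Γ ⧸ Z := QuotientGroup.mk g with hq
    have hmk : QuotientGroup.mk (Quotient.out q) = q := Quotient.out_eq' q
    have hz : (Quotient.out q)⁻¹ * g ∈ Z := by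
      rw [← QuotientGroup.eq]
      exact hmk
    set z : ↥Z := ⟨(Quotient.out q)⁻¹ * g, hz⟩ with hzz
    set a := (φ (Additive.ofMul z)).1 with ha
    set d := (φ (Additive.ofMul z)).2 with hd
    refine ⟨(Quotient.out q) * τ d, Set.mem_image2_of_mem ⟨q, rfl⟩ ⟨d, rfl⟩,
      Finsupp.equivFunOnFinite a, ?_⟩
    have hzeq : z = Additive.toMul (φ.symm ((a, 0) + (0, d))) := by
      rw [Prod.mk_add_mk, add_zero, zero_add, ha, hd]
      simp
    have hzg : (z : Γ) = ι (Finsupp.equivFunOnFinite a) * τ d := by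
      conv_lhs => rw [hzeq]
      rw [map_add, toMul_add]
      push_cast
      congr 1
      simp [hι]
    have hcen : ∀ x : Γ, x * τ d = τ d * x := by
      intro x
      have : τ d ∈ Z := by
        simp only [hτ]
        exact (Additive.toMul (φ.symm (0, d)) : ↥Z).2
      exact Subgroup.mem_center_iff.mp this x
    have hgz : g = (Quotient.out q) * (z : Γ) := by
      simp [hzz]
    rw [hgz, hzg, hcen (ι (Finsupp.equivFunOnFinite a)), ← mul_assoc]

end GroupAux

end APC

open APC Set

/-- Every finitely generated FC-group, with the word metric of a finite
generating set, has finite asymptotic dimension. -/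
theorem fg_fc_group_finite_asdim {Γ : Type*} [Group Γ] [MetricSpace Γ]
    (S : Finset Γ) (hgen : Subgroup.closure (S : Set Γ) = ⊤)
    (hword : ∀ x y : Γ, dist x y = (wordLength (S : Set Γ) (x⁻¹ * y) : ℝ))
    (hFC : IsFCGroup Γ) :
    HasFiniteAsdim Γ := by
  classical
  have hfg : Group.FG Γ := Group.fg_iff.mpr ⟨S, hgen, S.finite_toSet⟩
  have hZ := center_finiteIndex S hgen hFC
  obtain ⟨n, ι, F, hFfin, hinj, hhom, hcover⟩ := abelian_decomposition hfg hZ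
  -- basic properties of `ι`
  have hι1 : ι 0 = 1 := by
    have h := hhom 0 0
    rw [add_zero] at h
    exact left_eq_mul.mp h
  have hιinv : ∀ v, ι (-v) = (ι v)⁻¹ := by
    intro v
    have h := hhom v (-v)
    rw [add_neg_cancel, hι1] at h
    exact (inv_eq_of_mul_eq_one_right h.symm).symm
  have hιpow : ∀ (v : Fin n → ℤ) (m : ℤ), ι (m • v) = (ι v) ^ m := by
    intro v m
    induction m using Int.induction_on with
    | zero => simpa using hι1
    | succ k ih => rw [add_smul, one_smul, hhom, ih, zpow_add, zpow_one]
    | pred k ih =>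
        rw [sub_smul, one_smul, sub_eq_add_neg, hhom, ih, hιinv, zpow_sub, zpow_one]
  have hwlsum : ∀ (s : Finset (Fin n)) (u : Fin n → (Fin n → ℤ)),
      wordLength (S : Set Γ) (ι (∑ i ∈ s, u i)) ≤
        ∑ i ∈ s, wordLength (S : Set Γ) (ι (u i)) := by
    intro s u
    induction s using Finset.cons_induction with
    | empty => simp [hι1, wl_one]
    | cons a t ha ih =>
        rw [Finset.sum_cons, Finset.sum_cons, hhom]
        exact le_trans (wl_mul_le hgen _ _) (Nat.add_le_add_left ih _)
  set M : ℕ := Finset.univ.sup (fun i : Fin n => wordLength (S : Set Γ) (ι (Pi.single i 1)))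
    with hM
  have hwlv : ∀ (v : Fin n → ℤ) (ℓ : ℕ), (∀ i, (v i).natAbs ≤ ℓ) →
      wordLength (S : Set Γ) (ι v) ≤ n * (ℓ * M) := by
    intro v ℓ hv
    have hv' : v = ∑ i : Fin n, Pi.single i (v i) := (Finset.univ_sum_single v).symm
    have hsingle : ∀ i : Fin n, Pi.single i (v i) = ((v i) • Pi.single i (1 : ℤ) : Fin n → ℤ) := by
      intro i
      ext j
      by_cases h : i = j <;> simp [Pi.single_apply, h]
    calc wordLength (S : Set Γ) (ι v)
        ≤ ∑ i : Fin n, wordLength (S : Set Γ) (ι (Pi.single i (v i))) := by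
          conv_lhs => rw [hv']
          exact hwlsum _ _
      _ ≤ ∑ _i : Fin n, ℓ * M := by
          refine Finset.sum_le_sum fun i _ => ?_
          rw [hsingle i, hιpow]
          refine le_trans (wl_zpow_le hgen _ _) ?_
          have hMi : wordLength (S : Set Γ) (ι (Pi.single i 1)) ≤ M := by
            rw [hM]
            exact Finset.le_sup (f := fun i : Fin n =>
              wordLength (S : Set Γ) (ι (Pi.single i 1))) (Finset.mem_univ i)
          exact Nat.mul_le_mul (hv i) hMi
      _ = n * (ℓ * M) := by simp [Finset.sum_const, Finset.card_univ]
  have hdist : ∀ (f : Γ) (v w : Fin n → ℤ),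
      dist (f * ι v) (f * ι w) = (wordLength (S : Set Γ) (ι (w - v)) : ℝ) := by
    intro f v w
    rw [hword]
    have h1 : (f * ι v)⁻¹ * (f * ι w) = (ι v)⁻¹ * ι w := by group
    have h2 : (ι v)⁻¹ * ι w = ι (w - v) := by
      rw [← hιinv, ← hhom, neg_add_eq_sub]
    rw [h1, h2]
  -- the index type for families
  set Ff : Finset Γ := hFfin.toFinset with hFf
  set P := (Fin n → Bool) × {f : Γ // f ∈ Ff} with hP
  haveI : Fintype P := by infer_instance
  set Np := Fintype.card P with hNp
  set eqv : P ≃ Fin Np := Fintype.equivFin P with heqv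
  refine ⟨Np, fun r hr => ?_⟩
  set N : ℕ := ⌈r⌉₊ with hN
  have hball := wl_ball_finite S hgen N
  have hVfin : {v : Fin n → ℤ | wordLength (S : Set Γ) (ι v) ≤ N}.Finite :=
    Set.Finite.preimage hinj.injOn hball
  obtain ⟨ℓ, hℓ⟩ := (hVfin.image (fun v => Finset.univ.sup fun i => (v i).natAbs)).bddAbove
  have hL : ∀ v : Fin n → ℤ, wordLength (S : Set Γ) (ι v) ≤ N →
      ∀ i, (v i).natAbs ≤ ℓ := by
    intro v hv i
    have hmem : (Finset.univ.sup fun i => (v i).natAbs) ∈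
        (fun v : Fin n → ℤ => Finset.univ.sup fun i => (v i).natAbs) ''
          {v : Fin n → ℤ | wordLength (S : Set Γ) (ι v) ≤ N} := ⟨v, hv, rfl⟩
    have h1 : (Finset.univ.sup fun i => (v i).natAbs) ≤ ℓ := hℓ hmem
    exact le_trans (Finset.le_sup (f := fun i : Fin n => (v i).natAbs)
      (Finset.mem_univ i)) h1
  set bz : ℤ := (ℓ : ℤ) + 1 with hbz
  have hb : (0 : ℤ) < bz := by omega
  set box : (Fin n → Bool) → (Fin n → ℤ) → Set (Fin n → ℤ) := fun ε k =>
    {v | ∀ i, (2 * k i + (if ε i then 1 else 0)) * bz ≤ v i ∧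
      v i < (2 * k i + (if ε i then 1 else 0)) * bz + bz} with hbox
  have hcover_box : ∀ v : Fin n → ℤ, ∃ ε k, v ∈ box ε k := by
    intro v
    refine ⟨fun i => decide ((v i / bz) % 2 = 1), fun i => v i / bz / 2, fun i => ?_⟩
    have h1 : bz * (v i / bz) + v i % bz = v i := Int.mul_ediv_add_emod (v i) bz
    have h2 : 0 ≤ v i % bz := Int.emod_nonneg _ (ne_of_gt hb)
    have h3 : v i % bz < bz := Int.emod_lt_of_pos _ hb
    have h4 : (if (decide ((v i / bz) % 2 = 1) : Bool) then (1 : ℤ) else 0)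
        = (v i / bz) % 2 := by
      rcases Int.emod_two_eq (v i / bz) with h | h <;> simp [h]
    have h5 : 2 * (v i / bz / 2) + (v i / bz) % 2 = v i / bz := by omega
    constructor
    · rw [h4]
      calc (2 * (v i / bz / 2) + (v i / bz) % 2) * bz = (v i / bz) * bz := by rw [h5]
        _ ≤ v i := by
            rw [mul_comm]
            omega
    · rw [h4]
      calc v i < (v i / bz) * bz + bz := by
            rw [mul_comm]
            omega
        _ = (2 * (v i / bz / 2) + (v i / bz) % 2) * bz + bz := by rw [h5]
  have hdiam_box : ∀ ε k (v w : Fin n → ℤ), v ∈ box ε k → w ∈ box ε k →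
      ∀ i, ((w - v) i).natAbs ≤ ℓ := by
    intro ε k v w hv hw i
    obtain ⟨hv1, hv2⟩ := hv i
    obtain ⟨hw1, hw2⟩ := hw i
    simp only [Pi.sub_apply]
    omega
  have hsep_box : ∀ ε k k' (v w : Fin n → ℤ), v ∈ box ε k → w ∈ box ε k' →
      ∀ i, k i ≠ k' i → ℓ < ((w - v) i).natAbs := by
    intro ε k k' v w hv hw i hki
    obtain ⟨hv1, hv2⟩ := hv i
    obtain ⟨hw1, hw2⟩ := hw i
    set c : ℤ := (2 * k i + (if ε i then 1 else 0)) * bz with hc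
    set c' : ℤ := (2 * k' i + (if ε i then 1 else 0)) * bz with hc'
    have hd : c - c' = 2 * (k i - k' i) * bz := by
      rw [hc, hc']
      ring
    have hcases : 2 * bz ≤ c - c' ∨ c - c' ≤ -(2 * bz) := by
      rcases lt_or_gt_of_ne hki with h | h
      · right
        have hm : k i - k' i ≤ -1 := by omega
        nlinarith
      · left
        have hm : (1 : ℤ) ≤ k i - k' i := by omega
        nlinarith
    simp only [Pi.sub_apply]
    omega
  -- the families
  set fam : P → Set (Set Γ) := fun p =>
    {U | ∃ k, U = (fun v => (p.2 : Γ) * ι v) '' box p.1 k} with hfam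
  set 𝒰 : Fin (Np + 1) → Set (Set Γ) := fun j =>
    if h : (j : ℕ) < Np then fam (eqv.symm ⟨j, h⟩) else ∅ with h𝒰
  refine ⟨𝒰, ?_, ?_, ?_⟩
  · -- uniformly bounded
    intro j
    refine ⟨(n * (ℓ * M) : ℕ) + 1, by positivity, ?_⟩
    intro U hU x hx y hy
    simp only [h𝒰] at hU
    split_ifs at hU with h
    · obtain ⟨k, rfl⟩ := hU
      obtain ⟨v, hv, rfl⟩ := hx
      obtain ⟨w, hw, rfl⟩ := hy
      rw [hdist]
      have := hwlv (w - v) ℓ (hdiam_box _ _ _ _ hv hw)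
      push_cast
      have h2 : (wordLength (S : Set Γ) (ι (w - v)) : ℝ) ≤ (n * (ℓ * M) : ℕ) := by
        exact_mod_cast this
      push_cast at h2
      linarith
    · exact absurd hU (Set.notMem_empty U)
  · -- r-disjoint
    intro j U hU V hV hUV x hx y hy
    simp only [h𝒰] at hU hV
    split_ifs at hU hV with h
    · obtain ⟨k, rfl⟩ := hU
      obtain ⟨k', rfl⟩ := hV
      have hkk : k ≠ k' := by
        rintro rfl
        exact hUV rfl
      obtain ⟨i, hi⟩ := Function.ne_iff.mp hkk
      obtain ⟨v, hv, rfl⟩ := hx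
      obtain ⟨w, hw, rfl⟩ := hy
      have hgt : N < wordLength (S : Set Γ) (ι (w - v)) := by
        by_contra hle
        push_neg at hle
        exact absurd (hL _ hle i) (Nat.not_le.mpr (hsep_box _ _ _ _ _ hv hw i hi))
      rw [hdist]
      calc r ≤ (N : ℝ) := Nat.le_ceil r
        _ ≤ (wordLength (S : Set Γ) (ι (w - v)) : ℝ) := by exact_mod_cast hgt.le
    · exact absurd hU (Set.notMem_empty U)
  · -- covers
    ext g
    simp only [Set.mem_iUnion, Set.mem_sUnion, Set.mem_univ, iff_true]
    obtain ⟨f, hf, v, rfl⟩ := hcover g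
    obtain ⟨ε, k, hvk⟩ := hcover_box v
    set p : P := (ε, ⟨f, hFfin.mem_toFinset.mpr hf⟩) with hp'
    refine ⟨⟨(eqv p : ℕ), lt_trans (eqv p).isLt (Nat.lt_succ_self Np)⟩,
      (fun v => f * ι v) '' box ε k, ?_, ⟨v, hvk, rfl⟩⟩
    simp only [h𝒰]
    have hlt : ((⟨(eqv p : ℕ), lt_trans (eqv p).isLt (Nat.lt_succ_self Np)⟩ :
        Fin (Np + 1)) : ℕ) < Np := (eqv p).isLt
    rw [dif_pos hlt]
    have : (⟨(eqv p : ℕ), hlt⟩ : Fin Np) = eqv p := rfl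
    rw [this, Equiv.symm_apply_apply]
    exact ⟨k, rfl⟩
end

section
/- Let Γ be a finitely generated group in which every conjugacy class is finite (an FC-group). Then the center Z(Γ) has finite index in Γ. -/
open Metric Set Function

open APC Set

private theorem centralizer_fi {Γ : Type*} [Group Γ]
    (hFC : ∀ x : Γ, Set.Finite {y : Γ | ∃ g : Γ, g * x * g⁻¹ = y}) (g : Γ) :
    (Subgroup.centralizer (Subgroup.zpowers g : Set Γ)).FiniteIndex := by
  have h1 : Subgroup.centralizer (Subgroup.zpowers g : Set Γ) = Subgroup.centralizer {g} := by
    apply le_antisymm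
    · exact Subgroup.centralizer_le (by simpa using Subgroup.mem_zpowers g)
    · intro k hk
      rw [Subgroup.mem_centralizer_singleton_iff] at hk
      intro x hx
      obtain ⟨n, rfl⟩ := hx
      exact ((Commute.zpow_right hk n)).symm
  rw [h1, Subgroup.centralizer_eq_comap_stabilizer]
  have horb : MulAction.orbit (ConjAct Γ) g = {y : Γ | ∃ h : Γ, h * g * h⁻¹ = y} := by
    ext y
    constructor
    · rintro ⟨u, rfl⟩
      exact ⟨ConjAct.ofConjAct u, rfl⟩
    · rintro ⟨h, rfl⟩
      exact ⟨ConjAct.toConjAct h, rfl⟩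
  constructor
  erw [Subgroup.index_comap_of_surjective _ ConjAct.toConjAct.surjective,
    MulAction.index_stabilizer, horb]
  have hfin := hFC g
  have hne : {y : Γ | ∃ h : Γ, h * g * h⁻¹ = y}.Nonempty := ⟨g, 1, by simp⟩
  exact (Set.ncard_pos hfin).mpr hne |>.ne'

/-- In a finitely generated FC-group, the center has finite index. -/
theorem center_finiteIndex_of_fg_fc {Γ : Type*} [Group Γ] [Group.FG Γ]
    (hFC : IsFCGroup Γ) :
    (Subgroup.center Γ).FiniteIndex := by
  obtain ⟨S, hS⟩ := Group.FG.out (G := Γ)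
  rw [Subgroup.center_eq_infi' (s := (↑S : Set Γ)) hS]
  exact Subgroup.finiteIndex_iInf fun g => by
    simpa [Subgroup.zpowers_eq_closure, Subgroup.centralizer_closure] using centralizer_fi hFC (g : Γ)
end

section
/- Let X and Y be coarsely equivalent metric spaces and let m, n ∈ ℕ. If X has the (m,n)-DTUT property, then Y has the (m,n)-DTUT property. -/
open Metric Set Function

open APC Set

/-- The `(m,n)`-DTUT property is a coarse invariant:
if `X` and `Y` are coarsely equivalent and `X` has the `(m,n)`-DTUT property,
then so does `Y`. -/
theorem dtut_coarse_invariant {X Y : Type*} [MetricSpace X] [MetricSpace Y]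
    (m n : ℕ) (f : X → Y) (hf : CoarseEquiv f) (hX : DTUT X m n) :
    DTUT Y m n := by
  classical
  obtain ⟨⟨ρm, ρp, hρmM, hρpM, hρmT, hρ⟩, C, hC, hdense⟩ := hf
  choose g hg using hdense
  obtain ⟨T, hT⟩ := Filter.eventually_atTop.mp (Filter.tendsto_atTop.mp hρmT (C + 1))
  set D0 : ℝ := max T 0 with hD0def
  have hD0 : 0 ≤ D0 := le_max_right _ _
  have hgf : ∀ x : X, dist x (g (f x)) ≤ D0 := by
    intro x
    by_contra hcon
    push_neg at hcon
    have h1 : C + 1 ≤ ρm (dist x (g (f x))) :=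
      hT _ (le_of_lt (lt_of_le_of_lt (le_max_left T 0) hcon))
    have h2 : ρm (dist x (g (f x))) ≤ dist (f x) (f (g (f x))) := (hρ _ _).1
    have h3 := hg (f x)
    linarith
  obtain ⟨F, hFX⟩ := hX
  refine ⟨F, fun h k hk => ?_⟩
  obtain ⟨T2, hT2⟩ := Filter.eventually_atTop.mp
    (Filter.tendsto_atTop.mp hρmT (((k (Fin.last m) : ℕ) : ℝ) + 2 * C))
  set N : ℕ := ⌈T2⌉₊ with hNdef
  have hN : ((k (Fin.last m) : ℕ) : ℝ) + 2 * C ≤ ρm N := hT2 _ (Nat.le_ceil T2)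
  set M : ℕ := ⌈2 * D0⌉₊ with hMdef
  have hM : 2 * D0 ≤ (M : ℝ) := Nat.le_ceil _
  set k' : Fin (m + 1) → ℕ+ := fun i => ⟨N + M + 1 + i, by omega⟩ with hk'def
  have hk'mono : StrictMono k' := by
    intro i j hij
    have hij' : (i : ℕ) < (j : ℕ) := hij
    exact Subtype.mk_lt_mk.mpr (by omega)
  have hk'val : ∀ r : Fin (m + 1), ((k' r : ℕ) : ℝ) = (N : ℝ) + M + 1 + (r : ℕ) := by
    intro r
    have : (k' r : ℕ) = N + M + 1 + (r : ℕ) := rfl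
    rw [this]; push_cast; ring
  set h' : ℕ+ → ℕ+ :=
    fun q => if hq : ∃ r : Fin (m + 1), k' r = q then h (k hq.choose) else 1 with hh'def
  have hh' : ∀ r : Fin m, h' (k' r.succ) = h (k r.succ) := by
    intro r
    have hq : ∃ r' : Fin (m + 1), k' r' = k' r.succ := ⟨r.succ, rfl⟩
    have : h' (k' r.succ) = h (k hq.choose) := dif_pos hq
    rw [this, hk'mono.injective hq.choose_spec]
  obtain ⟨CX, DX, hXm⟩ := hFX h' k' hk'mono
  set Th : Set X → Set Y := fun U => g ⁻¹' {x | ∃ u ∈ U, dist x u ≤ D0} with hThdef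
  have hmemTh : ∀ (U : Set X) (y : Y), y ∈ Th U ↔ ∃ u ∈ U, dist (g y) u ≤ D0 :=
    fun U y => Iff.rfl
  -- lower bound lemma
  have hklast : ∀ r : Fin (m + 1), ((k r : ℕ) : ℝ) ≤ ((k (Fin.last m) : ℕ) : ℝ) := by
    intro r
    exact_mod_cast hk.monotone (Fin.le_last r)
  have hlow : ∀ (r : Fin (m + 1)) (U V : Set X),
      (∀ u ∈ U, ∀ v ∈ V, ((k' r : ℕ) : ℝ) ≤ dist u v) →
      ∀ y ∈ Th U, ∀ y' ∈ Th V, ((k r : ℕ) : ℝ) ≤ dist y y' := by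
    intro r U V hUV y hy y' hy'
    obtain ⟨u, hu, hdu⟩ := (hmemTh U y).mp hy
    obtain ⟨v, hv, hdv⟩ := (hmemTh V y').mp hy'
    have h1 : ((k' r : ℕ) : ℝ) ≤ dist u v := hUV u hu v hv
    have h2 : dist u v ≤ dist u (g y) + dist (g y) (g y') + dist (g y') v :=
      dist_triangle4 _ _ _ _
    have hcu : dist u (g y) = dist (g y) u := dist_comm _ _
    have hr0 : (0 : ℝ) ≤ ((r : ℕ) : ℝ) := Nat.cast_nonneg _
    have h3 : (N : ℝ) ≤ dist (g y) (g y') := by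
      have := hk'val r
      linarith
    have h4 : ((k (Fin.last m) : ℕ) : ℝ) + 2 * C ≤ ρm (dist (g y) (g y')) :=
      le_trans hN (hρmM h3)
    have h5 : ρm (dist (g y) (g y')) ≤ dist (f (g y)) (f (g y')) := (hρ _ _).1
    have h6 : dist (f (g y)) (f (g y')) ≤ dist (f (g y)) y + dist y y' + dist y' (f (g y')) :=
      dist_triangle4 _ _ _ _
    have hc1 : dist (f (g y)) y = dist y (f (g y)) := dist_comm _ _
    have hc2 := hg y
    have hc3 := hg y'
    have h7 := hklast r
    linarith
  -- boundedness lemma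
  have hbdd : ∀ 𝒰 : Set (Set X), UnifBounded 𝒰 → UnifBounded (Th '' 𝒰) := by
    rintro 𝒰 ⟨R, hR, hRb⟩
    refine ⟨max (ρp (R + 2 * D0) + 2 * C) 1, lt_of_lt_of_le one_pos (le_max_right _ _), ?_⟩
    rintro A ⟨U, hU, rfl⟩ y hy y' hy'
    obtain ⟨u, hu, hdu⟩ := (hmemTh U y).mp hy
    obtain ⟨u', hu', hdu'⟩ := (hmemTh U y').mp hy'
    have h1 : dist (g y) (g y') ≤ R + 2 * D0 := by
      have t1 : dist (g y) (g y') ≤ dist (g y) u + dist u u' + dist u' (g y') :=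
        dist_triangle4 _ _ _ _
      have t2 : dist u u' ≤ R := hRb U hU u hu u' hu'
      have t3 : dist u' (g y') = dist (g y') u' := dist_comm _ _
      linarith
    have h2 : dist (f (g y)) (f (g y')) ≤ ρp (R + 2 * D0) := le_trans (hρ _ _).2 (hρpM h1)
    have h3 : dist y y' ≤ dist y (f (g y)) + dist (f (g y)) (f (g y')) + dist (f (g y')) y' :=
      dist_triangle4 _ _ _ _
    have h4 := hg y
    have h5 := hg y'
    have h6 : dist (f (g y')) y' = dist y' (f (g y')) := dist_comm _ _
    have : dist y y' ≤ ρp (R + 2 * D0) + 2 * C := by linarith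
    exact le_trans this (le_max_left _ _)
  -- r-disjointness lemma
  have hdisjTh : ∀ (r : Fin (m + 1)) (𝒰 : Set (Set X)),
      RDisjoint ((k' r : ℕ) : ℝ) 𝒰 → RDisjoint ((k r : ℕ) : ℝ) (Th '' 𝒰) := by
    rintro r 𝒰 h𝒰 A ⟨U, hU, rfl⟩ B ⟨V, hV, rfl⟩ hAB y hy y' hy'
    have hUV : U ≠ V := fun hEq => hAB (by rw [hEq])
    exact hlow r U V (h𝒰 U hU V hV hUV) y hy y' hy'
  refine ⟨fun l j => Th '' CX l j, fun l i s => Th '' DX l i s, fun l hl => ?_⟩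
  have hl' : ∀ r : Fin m, l r ≤ h' (k' r.succ) := fun r => (hh' r) ▸ hl r
  obtain ⟨⟨hCb, hDb, hCd, hDd, hcov⟩, htr⟩ := hXm l hl'
  constructor
  · refine ⟨fun j => hbdd _ (hCb j), fun i s => hbdd _ (hDb i s),
      fun j => hdisjTh 0 _ (hCd j), fun i s => hdisjTh i.succ _ (hDd i s), ?_⟩
    -- cover
    apply Set.eq_univ_of_forall
    intro y
    have hx : g y ∈ (⋃ j, ⋃₀ CX l j) ∪ (⋃ i, ⋃ s, ⋃₀ DX l i s) := hcov ▸ Set.mem_univ _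
    have hself : ∀ U : Set X, g y ∈ U → y ∈ Th U :=
      fun U hU => (hmemTh U y).mpr ⟨g y, hU, by simp [hD0]⟩
    rcases hx with hx | hx
    · left
      simp only [Set.mem_iUnion, Set.mem_sUnion] at hx ⊢
      obtain ⟨j, U, hU, hgy⟩ := hx
      exact ⟨j, Th U, ⟨U, hU, rfl⟩, hself U hgy⟩
    · right
      simp only [Set.mem_iUnion, Set.mem_sUnion] at hx ⊢
      obtain ⟨i, s, U, hU, hgy⟩ := hx
      exact ⟨i, s, Th U, ⟨U, hU, rfl⟩, hself U hgy⟩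
  · intro i s
    obtain ⟨hne, hdisj, hrd⟩ := htr i s
    have hconv : ∀ t : ℕ+, t ≤ h (k i.succ) → t ≤ h' (k' i.succ) := fun t ht => (hh' i) ▸ ht
    refine ⟨?_, ?_, ?_⟩
    · -- nonemptiness
      intro t ht
      obtain ⟨x, hx⟩ := hne t (hconv t ht)
      obtain ⟨U, hU, hxU⟩ := hx
      refine ⟨f x, Th U, ⟨U, hU, rfl⟩, (hmemTh U (f x)).mpr ⟨x, hxU, ?_⟩⟩
      rw [dist_comm]; exact hgf x
    · -- disjointness of translates
      intro t t' ht ht' htt'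
      rw [Set.disjoint_left]
      rintro y hy hy'
      obtain ⟨A, ⟨U, hU, rfl⟩, hyA⟩ := hy
      obtain ⟨B, ⟨V, hV, rfl⟩, hyB⟩ := hy'
      obtain ⟨u, hu, hdu⟩ := (hmemTh U y).mp hyA
      obtain ⟨v, hv, hdv⟩ := (hmemTh V y).mp hyB
      by_cases hUV : U = V
      · subst hUV
        exact Set.disjoint_left.mp (hdisj t t' (hconv t ht) (hconv t' ht') htt')
          ⟨U, hU, hu⟩ ⟨U, hV, hu⟩
      · have hUm : U ∈ ⋃ r ∈ {r : ℕ+ | r ≤ h' (k' i.succ)},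
            DX (Function.update l i r) i s :=
          Set.mem_iUnion₂.mpr ⟨t, hconv t ht, hU⟩
        have hVm : V ∈ ⋃ r ∈ {r : ℕ+ | r ≤ h' (k' i.succ)},
            DX (Function.update l i r) i s :=
          Set.mem_iUnion₂.mpr ⟨t', hconv t' ht', hV⟩
        have h1 : ((k' i.succ : ℕ) : ℝ) ≤ dist u v := hrd U hUm V hVm hUV u hu v hv
        have h2 : dist u v ≤ dist u (g y) + dist (g y) v := dist_triangle _ _ _
        have hc : dist u (g y) = dist (g y) u := dist_comm _ _
        have h3 := hk'val i.succ
        have hr0 : (0 : ℝ) ≤ ((i.succ : ℕ) : ℝ) := Nat.cast_nonneg _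
        linarith
    · -- r-disjointness of the union family
      rintro A hA B hB hAB y hy y' hy'
      simp only [Set.mem_iUnion] at hA hB
      obtain ⟨t, ht, U, hU, rfl⟩ := hA
      obtain ⟨t', ht', V, hV, rfl⟩ := hB
      have hUV : U ≠ V := fun hEq => hAB (by rw [hEq])
      have hUm : U ∈ ⋃ r ∈ {r : ℕ+ | r ≤ h' (k' i.succ)},
          DX (Function.update l i r) i s :=
        Set.mem_iUnion₂.mpr ⟨t, hconv t ht, hU⟩
      have hVm : V ∈ ⋃ r ∈ {r : ℕ+ | r ≤ h' (k' i.succ)},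
          DX (Function.update l i r) i s :=
        Set.mem_iUnion₂.mpr ⟨t', hconv t' ht', hV⟩
      exact hlow i.succ U V (hrd U hUm V hVm hUV) y hy y' hy'
end

section
/- Let m, n_1, n_2 ∈ ℕ+ and let Γ_1, Γ_2 be groups equipped with proper left-invariant metrics d_1, d_2 having the (m,n_1)-DTUT and (m,n_2)-DTUT properties respectively. Then the direct product Γ_1 × Γ_2, equipped with the proper left-invariant metric d((a,b),(a',b')) = d_1(a,a') + d_2(b,b'), has the (m, n_1·n_2 + n_1 + n_2)-DTUT property. -/
open Metric Set Function

open APC Set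


section Aux

variable {X Γ₁ Γ₂ : Type*}

lemma rdisj_mono [MetricSpace X] {r r' : ℝ} (h : r ≤ r') {𝒰 : Set (Set X)}
    (H : RDisjoint r' 𝒰) : RDisjoint r 𝒰 :=
  fun U hU V hV hne x hx y hy => le_trans h (H U hU V hV hne x hx y hy)

lemma rdisj_subset [MetricSpace X] {r : ℝ} {𝒰 𝒱 : Set (Set X)} (h : 𝒱 ⊆ 𝒰)
    (H : RDisjoint r 𝒰) : RDisjoint r 𝒱 :=
  fun U hU V hV => H U (h hU) V (h hV)

open Classical in
noncomputable def padOf (𝒰 : Set (Set X)) : Set X :=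
  if h : ∃ U ∈ 𝒰, U.Nonempty then h.choose else ∅

lemma padOf_spec {𝒰 : Set (Set X)} (h : ∃ U ∈ 𝒰, U.Nonempty) :
    padOf 𝒰 ∈ 𝒰 ∧ (padOf 𝒰).Nonempty := by
  classical
  rw [padOf, dif_pos h]; exact ⟨h.choose_spec.1, h.choose_spec.2⟩

lemma padOf_cases (𝒰 : Set (Set X)) :
    padOf 𝒰 = ∅ ∨ (padOf 𝒰 ∈ 𝒰 ∧ (padOf 𝒰).Nonempty) := by
  by_cases h : ∃ U ∈ 𝒰, U.Nonempty
  · exact Or.inr (padOf_spec h)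
  · classical
    rw [padOf, dif_neg h]; exact Or.inl rfl

lemma padOf_subset (𝒰 : Set (Set X)) : padOf 𝒰 ⊆ ⋃₀ 𝒰 := by
  rcases padOf_cases 𝒰 with h | h
  · rw [h]; exact empty_subset _
  · exact subset_sUnion_of_mem h.1

lemma padOf_bdd [MetricSpace X] {𝒰 : Set (Set X)} (h : UnifBounded 𝒰) :
    ∃ R : ℝ, 0 < R ∧ ∀ x ∈ padOf 𝒰, ∀ y ∈ padOf 𝒰, dist x y ≤ R := by
  obtain ⟨R, hR, hb⟩ := h
  rcases padOf_cases 𝒰 with hp | hp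
  · exact ⟨R, hR, by rw [hp]; simp⟩
  · exact ⟨R, hR, fun x hx y hy => hb _ hp.1 x hx y hy⟩

def mainFam (𝒰 : Set (Set Γ₁)) (𝒱 : Set (Set Γ₂)) : Set (Set (Γ₁ × Γ₂)) :=
  {S | ∃ U ∈ 𝒰, ∃ V ∈ 𝒱, S = U ×ˢ V}

def famA [One Γ₂] (𝒰 : Set (Set Γ₁)) (𝒱 : Set (Set Γ₂)) (P : Set Γ₁) :
    Set (Set (Γ₁ × Γ₂)) :=
  mainFam 𝒰 𝒱 ∪ {P ×ˢ ({1} : Set Γ₂)}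

def famB [One Γ₁] (𝒰 : Set (Set Γ₁)) (𝒱 : Set (Set Γ₂)) (P : Set Γ₂) :
    Set (Set (Γ₁ × Γ₂)) :=
  mainFam 𝒰 𝒱 ∪ {({1} : Set Γ₁) ×ˢ P}

lemma famA_fst [One Γ₂] {𝒰 : Set (Set Γ₁)} {𝒱 : Set (Set Γ₂)} {P : Set Γ₁}
    {S : Set (Γ₁ × Γ₂)} (hS : S ∈ famA 𝒰 𝒱 P) {p : Γ₁ × Γ₂} (hp : p ∈ S) :
    p.1 ∈ ⋃₀ 𝒰 ∨ p.1 ∈ P := by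
  rcases hS with hS | hS
  · obtain ⟨U, hU, V, hV, rfl⟩ := hS
    exact Or.inl ⟨U, hU, hp.1⟩
  · rw [Set.mem_singleton_iff] at hS; subst hS
    exact Or.inr hp.1

lemma famB_snd [One Γ₁] {𝒰 : Set (Set Γ₁)} {𝒱 : Set (Set Γ₂)} {P : Set Γ₂}
    {S : Set (Γ₁ × Γ₂)} (hS : S ∈ famB 𝒰 𝒱 P) {p : Γ₁ × Γ₂} (hp : p ∈ S) :
    p.2 ∈ ⋃₀ 𝒱 ∨ p.2 ∈ P := by
  rcases hS with hS | hS
  · obtain ⟨U, hU, V, hV, rfl⟩ := hS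
    exact Or.inl ⟨V, hV, hp.2⟩
  · rw [Set.mem_singleton_iff] at hS; subst hS
    exact Or.inr hp.2

end Aux



section Aux2
variable {X Γ₁ Γ₂ : Type*}

-- ℕ+ helpers
lemma pnat_ne_a {t t' : ℕ+} (h : t ≠ t') : (t + t : ℕ+) ≠ t' + t' := by
  intro hh; apply h
  rw [← PNat.coe_inj] at hh ⊢; push_cast at hh; omega

lemma pnat_ne_b (t t' : ℕ+) : (t + t : ℕ+) ≠ t' + t' + 1 := by
  intro hh; rw [← PNat.coe_inj] at hh; push_cast at hh; omega

lemma pnat_ne_c {t t' : ℕ+} (h : t ≠ t') : (t + t + 1 : ℕ+) ≠ t' + t' + 1 := by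
  intro hh; apply h
  rw [← PNat.coe_inj] at hh ⊢; push_cast at hh; omega

lemma pnat_cap {t Hc : ℕ+} (h : (t : ℕ) ≤ (Hc : ℕ)) :
    (t + t : ℕ+) ≤ Hc + Hc + 1 ∧ (t + t + 1 : ℕ+) ≤ Hc + Hc + 1 := by
  constructor <;> (rw [← PNat.coe_le_coe]; push_cast; omega)

-- doubling of parameter vectors
def dbl {m : ℕ} (l : Fin m → ℕ+) : Fin m → ℕ+ := fun r => l r + l r

lemma dbl_update {m : ℕ} (l : Fin m → ℕ+) (i : Fin m) (t : ℕ+) :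
    dbl (Function.update l i t) = Function.update (dbl l) i (t + t) := by
  funext r
  rcases eq_or_ne r i with rfl | hr
  · simp [dbl]
  · simp [dbl, Function.update_of_ne hr]

lemma dbl_self_update {m : ℕ} (l : Fin m → ℕ+) (i : Fin m) :
    Function.update (dbl l) i (l i + l i) = dbl l :=
  Function.update_eq_self i (dbl l)

lemma upd_bound {m : ℕ} {f : Fin m → ℕ+} {c : ℕ+} (hf : ∀ r, f r ≤ c) {i : Fin m}
    {v : ℕ+} (hv : v ≤ c) : ∀ r, Function.update f i v r ≤ c := by
  intro r; rcases eq_or_ne r i with rfl | hr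
  · simpa using hv
  · simpa [Function.update_of_ne hr] using hf r

-- index decoding for the product C-families
def cdec (n₁ n₂ : ℕ) (j : Fin (n₁ * n₂ + n₁ + n₂ + 1)) : Fin (n₁ + 1) × Fin (n₂ + 1) :=
  finProdFinEquiv.symm (finCongr (by ring) j)

lemma cdec_surj (n₁ n₂ : ℕ) (j₁ : Fin (n₁ + 1)) (j₂ : Fin (n₂ + 1)) :
    ∃ j, cdec n₁ n₂ j = (j₁, j₂) := by
  refine ⟨(finCongr (by ring : n₁ * n₂ + n₁ + n₂ + 1 = (n₁+1) * (n₂+1))).symm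
    (finProdFinEquiv (j₁, j₂)), ?_⟩
  simp [cdec]

-- index type for the product D-families
abbrev ιT (m n₁ n₂ : ℕ) (F₁ F₂ : Fin m → ℕ) (i : Fin m) : Type :=
  (Fin (F₁ i + 1) × (Fin (n₂ + 1) ⊕ (Σ i' : Fin m, Fin (F₂ i' + 1)))) ⊕
    (Fin (F₂ i + 1) × Fin (n₁ + 1))

end Aux2

section ProdAux
variable {X Γ₁ Γ₂ : Type*} [MetricSpace Γ₁] [MetricSpace Γ₂]

lemma unifBounded_union [MetricSpace X] {A B : Set (Set X)}
    (hA : UnifBounded A) (hB : UnifBounded B) : UnifBounded (A ∪ B) := by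
  obtain ⟨R₁, hR₁, h₁⟩ := hA
  obtain ⟨R₂, hR₂, h₂⟩ := hB
  refine ⟨max R₁ R₂, lt_max_of_lt_left hR₁, ?_⟩
  rintro U (hU | hU) x hx y hy
  · exact le_trans (h₁ U hU x hx y hy) (le_max_left _ _)
  · exact le_trans (h₂ U hU x hx y hy) (le_max_right _ _)

variable (dP : MetricSpace (Γ₁ × Γ₂))
variable (hdist : ∀ a b : Γ₁ × Γ₂,
    @dist _ dP.toPseudoMetricSpace.toDist a b = dist a.1 b.1 + dist a.2 b.2)
include hdist

lemma dist_fst_le (p q : Γ₁ × Γ₂) :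
    dist p.1 q.1 ≤ @dist _ dP.toPseudoMetricSpace.toDist p q := by
  rw [hdist p q]; have := dist_nonneg (x := p.2) (y := q.2); linarith

lemma dist_snd_le (p q : Γ₁ × Γ₂) :
    dist p.2 q.2 ≤ @dist _ dP.toPseudoMetricSpace.toDist p q := by
  rw [hdist p q]; have := dist_nonneg (x := p.1) (y := q.1); linarith

lemma mainFam_bounded {𝒰 : Set (Set Γ₁)} {𝒱 : Set (Set Γ₂)}
    (h₁ : UnifBounded 𝒰) (h₂ : UnifBounded 𝒱) :
    @UnifBounded _ dP (mainFam 𝒰 𝒱) := by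
  obtain ⟨R₁, hR₁, hb₁⟩ := h₁
  obtain ⟨R₂, hR₂, hb₂⟩ := h₂
  refine ⟨R₁ + R₂, by linarith, ?_⟩
  rintro S ⟨U, hU, V, hV, rfl⟩ p hp q hq
  rw [hdist p q]
  exact add_le_add (hb₁ U hU _ hp.1 _ hq.1) (hb₂ V hV _ hp.2 _ hq.2)

lemma padA_bounded [One Γ₂] {P : Set Γ₁}
    (h : ∃ R : ℝ, 0 < R ∧ ∀ x ∈ P, ∀ y ∈ P, dist x y ≤ R) :
    @UnifBounded _ dP ({P ×ˢ ({1} : Set Γ₂)} : Set (Set (Γ₁ × Γ₂))) := by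
  obtain ⟨R, hR, hb⟩ := h
  refine ⟨R, hR, ?_⟩
  intro S hS p hp q hq
  rw [Set.mem_singleton_iff] at hS; subst hS
  rw [hdist p q]
  have h2 : p.2 = q.2 := by
    have := hp.2; have := hq.2
    simp only [Set.mem_singleton_iff] at *
    rw [hp.2, hq.2]
  rw [h2, dist_self]
  simpa using hb _ hp.1 _ hq.1

lemma padB_bounded [One Γ₁] {P : Set Γ₂}
    (h : ∃ R : ℝ, 0 < R ∧ ∀ x ∈ P, ∀ y ∈ P, dist x y ≤ R) :
    @UnifBounded _ dP ({({1} : Set Γ₁) ×ˢ P} : Set (Set (Γ₁ × Γ₂))) := by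
  obtain ⟨R, hR, hb⟩ := h
  refine ⟨R, hR, ?_⟩
  intro S hS p hp q hq
  rw [Set.mem_singleton_iff] at hS; subst hS
  rw [hdist p q]
  have h1 : p.1 = q.1 := by rw [hp.1, hq.1]
  rw [h1, dist_self]
  simpa using hb _ hp.2 _ hq.2

lemma mainFam_rdisj {r K₁ K₂ : ℝ} (hrK₁ : r ≤ K₁) (hrK₂ : r ≤ K₂)
    {𝒰 : Set (Set Γ₁)} {𝒱 : Set (Set Γ₂)}
    (h₁ : RDisjoint K₁ 𝒰) (h₂ : RDisjoint K₂ 𝒱) :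
    @RDisjoint _ dP r (mainFam 𝒰 𝒱) := by
  rintro S ⟨U, hU, V, hV, rfl⟩ S' ⟨U', hU', V', hV', rfl⟩ hne p hp q hq
  by_cases hUU : U = U'
  · subst hUU
    by_cases hVV : V = V'
    · exact absurd (by rw [hVV]) hne
    · exact le_trans hrK₂ (le_trans (h₂ V hV V' hV' hVV p.2 hp.2 q.2 hq.2)
        (dist_snd_le dP hdist p q))
  · exact le_trans hrK₁ (le_trans (h₁ U hU U' hU' hUU p.1 hp.1 q.1 hq.1)
      (dist_fst_le dP hdist p q))

lemma masterA [One Γ₂] {r K' K'' : ℝ} (hrK : r ≤ K') (hrK2 : r ≤ K'')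
    (T : Set ℕ+) (𝒟 : ℕ+ → Set (Set Γ₁)) (Pf : ℕ+ → Set Γ₁) (𝒱 : ℕ+ → Set (Set Γ₂))
    (𝒰big : Set (Set Γ₁))
    (hsub : ∀ t ∈ T, 𝒟 t ⊆ 𝒰big)
    (hpad : ∀ t ∈ T, Pf t ∈ 𝒰big)
    (hbig : RDisjoint K' 𝒰big)
    (hco : ∀ t ∈ T, ∀ t' ∈ T, ∀ U, U ∈ 𝒟 t → U ∈ 𝒟 t' → U.Nonempty → 𝒱 t = 𝒱 t')
    (hmp : ∀ t ∈ T, ∀ t' ∈ T, ∀ U, U ∈ 𝒟 t → U = Pf t' → ¬ U.Nonempty)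
    (h𝒱 : ∀ t ∈ T, RDisjoint K'' (𝒱 t)) :
    @RDisjoint _ dP r (⋃ t ∈ T, famA (𝒟 t) (𝒱 t) (Pf t)) := by
  intro S hS S' hS' hne p hp q hq
  simp only [Set.mem_iUnion, exists_prop] at hS hS'
  obtain ⟨t, hT, hS⟩ := hS
  obtain ⟨t', hT', hS'⟩ := hS'
  rcases hS with hS | hS <;> rcases hS' with hS' | hS'
  · obtain ⟨U, hU, V, hV, rfl⟩ := hS
    obtain ⟨U', hU', V', hV', rfl⟩ := hS'
    by_cases hUU : U = U'
    · subst hUU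
      have hVeq := hco t hT t' hT' U hU hU' ⟨p.1, hp.1⟩
      by_cases hVV : V = V'
      · exact absurd (by rw [hVV]) hne
      · exact le_trans hrK2 (le_trans (h𝒱 t hT V hV V' (by rw [hVeq]; exact hV') hVV
          p.2 hp.2 q.2 hq.2) (dist_snd_le dP hdist p q))
    · exact le_trans hrK (le_trans (hbig U (hsub t hT hU) U' (hsub t' hT' hU') hUU
        p.1 hp.1 q.1 hq.1) (dist_fst_le dP hdist p q))
  · obtain ⟨U, hU, V, hV, rfl⟩ := hS
    rw [Set.mem_singleton_iff] at hS'; subst hS'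
    by_cases hUP : U = Pf t'
    · exact absurd ⟨p.1, hp.1⟩ (hmp t hT t' hT' U hU hUP)
    · exact le_trans hrK (le_trans (hbig U (hsub t hT hU) (Pf t') (hpad t' hT') hUP
        p.1 hp.1 q.1 hq.1) (dist_fst_le dP hdist p q))
  · rw [Set.mem_singleton_iff] at hS; subst hS
    obtain ⟨U', hU', V', hV', rfl⟩ := hS'
    by_cases hUP : U' = Pf t
    · exact absurd ⟨q.1, hq.1⟩ (hmp t' hT' t hT U' hU' hUP)
    · exact le_trans hrK (le_trans (hbig (Pf t) (hpad t hT) U' (hsub t' hT' hU')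
        (fun hh => hUP hh.symm) p.1 hp.1 q.1 hq.1) (dist_fst_le dP hdist p q))
  · rw [Set.mem_singleton_iff] at hS hS'; subst hS; subst hS'
    by_cases hPP : Pf t = Pf t'
    · exact absurd (by rw [hPP]) hne
    · exact le_trans hrK (le_trans (hbig (Pf t) (hpad t hT) (Pf t') (hpad t' hT') hPP
        p.1 hp.1 q.1 hq.1) (dist_fst_le dP hdist p q))

lemma masterB [One Γ₁] {r K' K'' : ℝ} (hrK : r ≤ K') (hrK2 : r ≤ K'')
    (T : Set ℕ+) (𝒰f : ℕ+ → Set (Set Γ₁)) (𝒟 : ℕ+ → Set (Set Γ₂)) (Pf : ℕ+ → Set Γ₂)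
    (𝒱big : Set (Set Γ₂))
    (hsub : ∀ t ∈ T, 𝒟 t ⊆ 𝒱big)
    (hpad : ∀ t ∈ T, Pf t ∈ 𝒱big)
    (hbig : RDisjoint K' 𝒱big)
    (hco : ∀ t ∈ T, ∀ t' ∈ T, ∀ V, V ∈ 𝒟 t → V ∈ 𝒟 t' → V.Nonempty → 𝒰f t = 𝒰f t')
    (hmp : ∀ t ∈ T, ∀ t' ∈ T, ∀ V, V ∈ 𝒟 t → V = Pf t' → ¬ V.Nonempty)
    (h𝒰 : ∀ t ∈ T, RDisjoint K'' (𝒰f t)) :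
    @RDisjoint _ dP r (⋃ t ∈ T, famB (𝒰f t) (𝒟 t) (Pf t)) := by
  intro S hS S' hS' hne p hp q hq
  simp only [Set.mem_iUnion, exists_prop] at hS hS'
  obtain ⟨t, hT, hS⟩ := hS
  obtain ⟨t', hT', hS'⟩ := hS'
  rcases hS with hS | hS <;> rcases hS' with hS' | hS'
  · obtain ⟨U, hU, V, hV, rfl⟩ := hS
    obtain ⟨U', hU', V', hV', rfl⟩ := hS'
    by_cases hVV : V = V'
    · subst hVV
      have hUeq := hco t hT t' hT' V hV hV' ⟨p.2, hp.2⟩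
      by_cases hUU : U = U'
      · exact absurd (by rw [hUU]) hne
      · exact le_trans hrK2 (le_trans (h𝒰 t hT U hU U' (by rw [hUeq]; exact hU') hUU
          p.1 hp.1 q.1 hq.1) (dist_fst_le dP hdist p q))
    · exact le_trans hrK (le_trans (hbig V (hsub t hT hV) V' (hsub t' hT' hV') hVV
        p.2 hp.2 q.2 hq.2) (dist_snd_le dP hdist p q))
  · obtain ⟨U, hU, V, hV, rfl⟩ := hS
    rw [Set.mem_singleton_iff] at hS'; subst hS'
    by_cases hVP : V = Pf t'
    · exact absurd ⟨p.2, hp.2⟩ (hmp t hT t' hT' V hV hVP)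
    · exact le_trans hrK (le_trans (hbig V (hsub t hT hV) (Pf t') (hpad t' hT') hVP
        p.2 hp.2 q.2 hq.2) (dist_snd_le dP hdist p q))
  · rw [Set.mem_singleton_iff] at hS; subst hS
    obtain ⟨U', hU', V', hV', rfl⟩ := hS'
    by_cases hVP : V' = Pf t
    · exact absurd ⟨q.2, hq.2⟩ (hmp t' hT' t hT V' hV' hVP)
    · exact le_trans hrK (le_trans (hbig (Pf t) (hpad t hT) V' (hsub t' hT' hV')
        (fun hh => hVP hh.symm) p.2 hp.2 q.2 hq.2) (dist_snd_le dP hdist p q))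
  · rw [Set.mem_singleton_iff] at hS hS'; subst hS; subst hS'
    by_cases hPP : Pf t = Pf t'
    · exact absurd (by rw [hPP]) hne
    · exact le_trans hrK (le_trans (hbig (Pf t) (hpad t hT) (Pf t') (hpad t' hT') hPP
        p.2 hp.2 q.2 hq.2) (dist_snd_le dP hdist p q))

end ProdAux

/-- If `Γ₁`, `Γ₂` are groups with proper left-invariant metrics having the
`(m,n₁)`- and `(m,n₂)`-DTUT properties, then `Γ₁ × Γ₂` with the sum metric has the
`(m, n₁·n₂ + n₁ + n₂)`-DTUT property. -/
theorem prod_dtut {Γ₁ Γ₂ : Type*} [Group Γ₁] [Group Γ₂]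
    [MetricSpace Γ₁] [MetricSpace Γ₂]
    (m n₁ n₂ : ℕ) (hm : 0 < m) (hn₁ : 0 < n₁) (hn₂ : 0 < n₂)
    (h₁proper : ProperMet Γ₁) (h₁inv : LeftInvariant Γ₁)
    (h₂proper : ProperMet Γ₂) (h₂inv : LeftInvariant Γ₂)
    (h₁ : DTUT Γ₁ m n₁) (h₂ : DTUT Γ₂ m n₂)
    (dP : MetricSpace (Γ₁ × Γ₂))
    (hdist : ∀ a b : Γ₁ × Γ₂,
      @dist _ dP.toPseudoMetricSpace.toDist a b = dist a.1 b.1 + dist a.2 b.2) :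
    @DTUT (Γ₁ × Γ₂) dP m (n₁ * n₂ + n₁ + n₂) := by
  classical
  obtain ⟨F₁, H₁⟩ := h₁
  obtain ⟨F₂, H₂⟩ := h₂
  refine ⟨fun i => Fintype.card (ιT m n₁ n₂ F₁ F₂ i) - 1, ?_⟩
  intro h k hk
  have ecard : ∀ i : Fin m,
      Fintype.card (ιT m n₁ n₂ F₁ F₂ i) = (Fintype.card (ιT m n₁ n₂ F₁ F₂ i) - 1) + 1 := by
    intro i
    have : 0 < Fintype.card (ιT m n₁ n₂ F₁ F₂ i) :=
      Fintype.card_pos_iff.mpr ⟨Sum.inr (0, 0)⟩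
    omega
  let e : ∀ i : Fin m, ιT m n₁ n₂ F₁ F₂ i ≃ Fin (Fintype.card (ιT m n₁ n₂ F₁ F₂ i) - 1 + 1) :=
    fun i => Fintype.equivFinOfCardEq (ecard i)
  -- scales and capacities
  set K : ℕ+ := k (Fin.last m) with hKdef
  set Hc : ℕ+ := ⟨(∑ r : Fin (m + 1), ((h (k r) : ℕ))) + 1, Nat.succ_pos _⟩ with hHcdef
  have hHc : ∀ r : Fin (m + 1), ((h (k r) : ℕ)) ≤ (Hc : ℕ) := by
    intro r
    have h1 : (h (k r) : ℕ) ≤ ∑ r : Fin (m + 1), ((h (k r) : ℕ)) :=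
      Finset.single_le_sum (f := fun r : Fin (m+1) => ((h (k r) : ℕ)))
        (fun i _ => Nat.zero_le _) (Finset.mem_univ r)
    have h2 : (Hc : ℕ) = (∑ r : Fin (m + 1), ((h (k r) : ℕ))) + 1 := rfl
    omega
  set cap : ℕ+ := Hc + Hc + 1 with hcapdef
  set k' : Fin (m + 1) → ℕ+ := fun r => K * ⟨r.val + 1, Nat.succ_pos _⟩ with hk'def
  have hk'mono : StrictMono k' := by
    intro a b hab
    rw [← PNat.coe_lt_coe]
    have hK := K.pos
    have hab' : a.val < b.val := hab
    show (K : ℕ) * (a.val + 1) < (K : ℕ) * (b.val + 1)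
    exact (mul_lt_mul_iff_right₀ hK).mpr (by omega)
  obtain ⟨C₁, D₁, P₁⟩ := H₁ (fun _ => cap) k' hk'mono
  obtain ⟨C₂, D₂, P₂⟩ := H₂ (fun _ => cap) k' hk'mono
  -- the combined Γ₂ families
  let fam₂ : (Fin m → ℕ+) → (Fin (n₂ + 1) ⊕ (Σ i' : Fin m, Fin (F₂ i' + 1))) → Set (Set Γ₂) :=
    fun b w => Sum.elim (fun j => C₂ b j) (fun p => D₂ b p.1 p.2) w
  refine ⟨fun l j => mainFam (C₁ (dbl l) (cdec n₁ n₂ j).1) (C₂ (dbl l) (cdec n₁ n₂ j).2),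
    fun l i s => Sum.elim
      (fun p => famA (D₁ (dbl l) i p.1) (fam₂ (dbl l) p.2)
        (padOf (D₁ (Function.update (dbl l) i (l i + l i + 1)) i p.1)))
      (fun p => famB (C₁ (dbl l) p.2) (D₂ (dbl l) i p.1)
        (padOf (D₂ (Function.update (dbl l) i (l i + l i + 1)) i p.1)))
      ((e i).symm s), ?_⟩
  intro l hl
  have P₁bound : ∀ (l' : Fin m → ℕ+), (∀ r : Fin m, l' r ≤ h (k r.succ)) →
      ∀ r, dbl l' r ≤ cap := by
    intro l' hl' r
    rw [← PNat.coe_le_coe]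
    have h1 : (l' r : ℕ) ≤ (Hc : ℕ) :=
      le_trans ((PNat.coe_le_coe _ _).mpr (hl' r)) (hHc r.succ)
    have h2 : ((dbl l' r : ℕ+) : ℕ) = (l' r : ℕ) + (l' r : ℕ) := by simp [dbl]
    have h3 : ((cap : ℕ+) : ℕ) = (Hc : ℕ) + (Hc : ℕ) + 1 := by rw [hcapdef]; push_cast; ring
    omega
  have hb0 : ∀ r, dbl l r ≤ cap := P₁bound l hl
  have hcapt : ∀ (i : Fin m) (t : ℕ+), t ≤ h (k i.succ) →
      ((t + t : ℕ+) ≤ cap ∧ (t + t + 1 : ℕ+) ≤ cap) := by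
    intro i t ht
    have h1 : (t : ℕ) ≤ (Hc : ℕ) := le_trans ((PNat.coe_le_coe _ _).mpr ht) (hHc i.succ)
    rw [hcapdef]
    exact pnat_cap h1
  have hKk' : ∀ j : Fin (m + 1), ((K : ℕ) : ℝ) ≤ ((k' j : ℕ) : ℝ) := by
    intro j
    have h1 : (K : ℕ) ≤ (K : ℕ) * (j.val + 1) := Nat.le_mul_of_pos_right _ (Nat.succ_pos _)
    have h2 : ((k' j : ℕ)) = (K : ℕ) * (j.val + 1) := rfl
    rw [h2]
    exact_mod_cast h1
  have hkK : ∀ j : Fin (m + 1), ((k j : ℕ) : ℝ) ≤ ((K : ℕ) : ℝ) := by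
    intro j
    exact_mod_cast (PNat.coe_le_coe _ _).mpr (hk.monotone (Fin.le_last j))
  have hkk' : ∀ (j j' : Fin (m + 1)), ((k j : ℕ) : ℝ) ≤ ((k' j' : ℕ) : ℝ) :=
    fun j j' => le_trans (hkK j) (hKk' j')
  have P₁l := P₁ (dbl l) hb0
  have P₂l := P₂ (dbl l) hb0
  have famUB : ∀ (b : Fin m → ℕ+), (∀ r, b r ≤ cap) → ∀ w, UnifBounded (fam₂ b w) := by
    intro b hb w
    rcases w with j | p
    · exact ((P₂ b hb).1).1 j
    · exact ((P₂ b hb).1).2.1 p.1 p.2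
  have famRD : ∀ (b : Fin m → ℕ+), (∀ r, b r ≤ cap) → ∀ w,
      RDisjoint ((K : ℕ) : ℝ) (fam₂ b w) := by
    intro b hb w
    rcases w with j | p
    · exact rdisj_mono (hKk' 0) (((P₂ b hb).1).2.2.1 j)
    · exact rdisj_mono (hKk' p.1.succ) (((P₂ b hb).1).2.2.2.1 p.1 p.2)
  have padAspec : ∀ (i : Fin m) (s₁ : Fin (F₁ i + 1)) (v : ℕ+), v ≤ cap →
      padOf (D₁ (Function.update (dbl l) i v) i s₁) ∈ D₁ (Function.update (dbl l) i v) i s₁ ∧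
      (padOf (D₁ (Function.update (dbl l) i v) i s₁)).Nonempty := by
    intro i s₁ v hv
    obtain ⟨x, U, hU, hx⟩ := (P₁l.2 i s₁).1 v hv
    exact padOf_spec ⟨U, hU, x, hx⟩
  have padBspec : ∀ (i : Fin m) (s₂ : Fin (F₂ i + 1)) (v : ℕ+), v ≤ cap →
      padOf (D₂ (Function.update (dbl l) i v) i s₂) ∈ D₂ (Function.update (dbl l) i v) i s₂ ∧
      (padOf (D₂ (Function.update (dbl l) i v) i s₂)).Nonempty := by
    intro i s₂ v hv
    obtain ⟨x, U, hU, hx⟩ := (P₂l.2 i s₂).1 v hv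
    exact padOf_spec ⟨U, hU, x, hx⟩
  have TdA : ∀ (i : Fin m) (s₁ : Fin (F₁ i + 1)) (t t' : ℕ+), t ≤ cap → t' ≤ cap → t ≠ t' →
      Disjoint (⋃₀ D₁ (Function.update (dbl l) i t) i s₁)
        (⋃₀ D₁ (Function.update (dbl l) i t') i s₁) :=
    fun i s₁ => (P₁l.2 i s₁).2.1
  have TdB : ∀ (i : Fin m) (s₂ : Fin (F₂ i + 1)) (t t' : ℕ+), t ≤ cap → t' ≤ cap → t ≠ t' →
      Disjoint (⋃₀ D₂ (Function.update (dbl l) i t) i s₂)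
        (⋃₀ D₂ (Function.update (dbl l) i t') i s₂) :=
    fun i s₂ => (P₂l.2 i s₂).2.1
  let AF : (i : Fin m) → Fin (F₁ i + 1) →
      (Fin (n₂ + 1) ⊕ (Σ i' : Fin m, Fin (F₂ i' + 1))) → ℕ+ → Set (Set (Γ₁ × Γ₂)) :=
    fun i s₁ w t => famA (D₁ (Function.update (dbl l) i (t + t)) i s₁)
      (fam₂ (Function.update (dbl l) i (t + t)) w)
      (padOf (D₁ (Function.update (dbl l) i (t + t + 1)) i s₁))
  let BF : (i : Fin m) → Fin (F₂ i + 1) → Fin (n₁ + 1) → ℕ+ → Set (Set (Γ₁ × Γ₂)) :=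
    fun i s₂ j₁ t => famB (C₁ (Function.update (dbl l) i (t + t)) j₁)
      (D₂ (Function.update (dbl l) i (t + t)) i s₂)
      (padOf (D₂ (Function.update (dbl l) i (t + t + 1)) i s₂))
  have keyA_RD : ∀ (i : Fin m) (s₁ : Fin (F₁ i + 1)) w,
      @RDisjoint _ dP ((k i.succ : ℕ) : ℝ)
        (⋃ t ∈ {t : ℕ+ | t ≤ h (k i.succ)}, AF i s₁ w t) := by
    intro i s₁ w
    refine masterA dP hdist (hkk' i.succ i.succ) (hkK i.succ) {t : ℕ+ | t ≤ h (k i.succ)}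
      (fun t => D₁ (Function.update (dbl l) i (t + t)) i s₁)
      (fun t => padOf (D₁ (Function.update (dbl l) i (t + t + 1)) i s₁))
      (fun t => fam₂ (Function.update (dbl l) i (t + t)) w)
      (⋃ v ∈ {v : ℕ+ | v ≤ cap}, D₁ (Function.update (dbl l) i v) i s₁)
      ?_ ?_ ?_ ?_ ?_ ?_
    · intro t hT
      exact Set.subset_biUnion_of_mem (u := fun v => D₁ (Function.update (dbl l) i v) i s₁)
        ((hcapt i t hT).1 : (t + t : ℕ+) ∈ {v : ℕ+ | v ≤ cap})
    · intro t hT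
      exact Set.mem_biUnion ((hcapt i t hT).2 : (t + t + 1 : ℕ+) ∈ {v : ℕ+ | v ≤ cap})
        (padAspec i s₁ _ (hcapt i t hT).2).1
    · exact (P₁l.2 i s₁).2.2
    · intro t hT t' hT' U hUt hUt' hUne
      by_cases htt : t = t'
      · rw [htt]
      · obtain ⟨x, hx⟩ := hUne
        exact absurd (⟨U, hUt', hx⟩ : x ∈ ⋃₀ D₁ (Function.update (dbl l) i (t' + t')) i s₁)
          (Set.disjoint_left.mp
            (TdA i s₁ (t + t) (t' + t') (hcapt i t hT).1 (hcapt i t' hT').1 (pnat_ne_a htt))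
            ⟨U, hUt, hx⟩)
    · rintro t hT t' hT' U hUt hUP ⟨x, hx⟩
      have hpadm := (padAspec i s₁ (t' + t' + 1) (hcapt i t' hT').2).1
      have hUP' : U = padOf (D₁ (Function.update (dbl l) i (t' + t' + 1)) i s₁) := hUP
      have hx' : x ∈ padOf (D₁ (Function.update (dbl l) i (t' + t' + 1)) i s₁) := by
        rw [← hUP']; exact hx
      exact absurd
        (⟨padOf (D₁ (Function.update (dbl l) i (t' + t' + 1)) i s₁), hpadm, hx'⟩ :
          x ∈ ⋃₀ D₁ (Function.update (dbl l) i (t' + t' + 1)) i s₁)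
        (Set.disjoint_left.mp
          (TdA i s₁ (t + t) (t' + t' + 1) (hcapt i t hT).1 (hcapt i t' hT').2 (pnat_ne_b t t'))
          ⟨U, hUt, hx⟩)
    · intro t hT
      exact famRD _ (upd_bound hb0 (hcapt i t hT).1) w
  have keyA_NE : ∀ (i : Fin m) (s₁ : Fin (F₁ i + 1)) w (t : ℕ+), t ≤ h (k i.succ) →
      (⋃₀ AF i s₁ w t).Nonempty := by
    intro i s₁ w t ht
    obtain ⟨hmem, x, hx⟩ := padAspec i s₁ (t + t + 1) (hcapt i t ht).2
    exact ⟨(x, 1), padOf (D₁ (Function.update (dbl l) i (t + t + 1)) i s₁) ×ˢ ({1} : Set Γ₂),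
      Or.inr rfl, ⟨hx, rfl⟩⟩
  have keyB_NE : ∀ (i : Fin m) (s₂ : Fin (F₂ i + 1)) (j₁ : Fin (n₁ + 1)) (t : ℕ+),
      t ≤ h (k i.succ) → (⋃₀ BF i s₂ j₁ t).Nonempty := by
    intro i s₂ j₁ t ht
    obtain ⟨hmem, x, hx⟩ := padBspec i s₂ (t + t + 1) (hcapt i t ht).2
    exact ⟨(1, x), ({1} : Set Γ₁) ×ˢ padOf (D₂ (Function.update (dbl l) i (t + t + 1)) i s₂),
      Or.inr rfl, ⟨rfl, hx⟩⟩
  have keyA_DJ : ∀ (i : Fin m) (s₁ : Fin (F₁ i + 1)) w (t t' : ℕ+),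
      t ≤ h (k i.succ) → t' ≤ h (k i.succ) → t ≠ t' →
      Disjoint (⋃₀ AF i s₁ w t) (⋃₀ AF i s₁ w t') := by
    intro i s₁ w t t' ht ht' htt
    rw [Set.disjoint_left]
    rintro p ⟨S, hS, hpS⟩ ⟨S', hS', hpS'⟩
    have h1 : p.1 ∈ ⋃₀ D₁ (Function.update (dbl l) i (t + t)) i s₁ ∨
        p.1 ∈ ⋃₀ D₁ (Function.update (dbl l) i (t + t + 1)) i s₁ := by
      rcases famA_fst hS hpS with hh | hh
      · exact Or.inl hh
      · exact Or.inr (padOf_subset _ hh)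
    have h2 : p.1 ∈ ⋃₀ D₁ (Function.update (dbl l) i (t' + t')) i s₁ ∨
        p.1 ∈ ⋃₀ D₁ (Function.update (dbl l) i (t' + t' + 1)) i s₁ := by
      rcases famA_fst hS' hpS' with hh | hh
      · exact Or.inl hh
      · exact Or.inr (padOf_subset _ hh)
    rcases h1 with h1 | h1 <;> rcases h2 with h2 | h2
    · exact Set.disjoint_left.mp
        (TdA i s₁ _ _ (hcapt i t ht).1 (hcapt i t' ht').1 (pnat_ne_a htt)) h1 h2
    · exact Set.disjoint_left.mp
        (TdA i s₁ _ _ (hcapt i t ht).1 (hcapt i t' ht').2 (pnat_ne_b t t')) h1 h2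
    · exact Set.disjoint_left.mp
        (TdA i s₁ _ _ (hcapt i t ht).2 (hcapt i t' ht').1 (Ne.symm (pnat_ne_b t' t))) h1 h2
    · exact Set.disjoint_left.mp
        (TdA i s₁ _ _ (hcapt i t ht).2 (hcapt i t' ht').2 (pnat_ne_c htt)) h1 h2
  have keyB_DJ : ∀ (i : Fin m) (s₂ : Fin (F₂ i + 1)) (j₁ : Fin (n₁ + 1)) (t t' : ℕ+),
      t ≤ h (k i.succ) → t' ≤ h (k i.succ) → t ≠ t' →
      Disjoint (⋃₀ BF i s₂ j₁ t) (⋃₀ BF i s₂ j₁ t') := by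
    intro i s₂ j₁ t t' ht ht' htt
    rw [Set.disjoint_left]
    rintro p ⟨S, hS, hpS⟩ ⟨S', hS', hpS'⟩
    have h1 : p.2 ∈ ⋃₀ D₂ (Function.update (dbl l) i (t + t)) i s₂ ∨
        p.2 ∈ ⋃₀ D₂ (Function.update (dbl l) i (t + t + 1)) i s₂ := by
      rcases famB_snd hS hpS with hh | hh
      · exact Or.inl hh
      · exact Or.inr (padOf_subset _ hh)
    have h2 : p.2 ∈ ⋃₀ D₂ (Function.update (dbl l) i (t' + t')) i s₂ ∨
        p.2 ∈ ⋃₀ D₂ (Function.update (dbl l) i (t' + t' + 1)) i s₂ := by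
      rcases famB_snd hS' hpS' with hh | hh
      · exact Or.inl hh
      · exact Or.inr (padOf_subset _ hh)
    rcases h1 with h1 | h1 <;> rcases h2 with h2 | h2
    · exact Set.disjoint_left.mp
        (TdB i s₂ _ _ (hcapt i t ht).1 (hcapt i t' ht').1 (pnat_ne_a htt)) h1 h2
    · exact Set.disjoint_left.mp
        (TdB i s₂ _ _ (hcapt i t ht).1 (hcapt i t' ht').2 (pnat_ne_b t t')) h1 h2
    · exact Set.disjoint_left.mp
        (TdB i s₂ _ _ (hcapt i t ht).2 (hcapt i t' ht').1 (Ne.symm (pnat_ne_b t' t))) h1 h2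
    · exact Set.disjoint_left.mp
        (TdB i s₂ _ _ (hcapt i t ht).2 (hcapt i t' ht').2 (pnat_ne_c htt)) h1 h2
  have keyB_RD : ∀ (i : Fin m) (s₂ : Fin (F₂ i + 1)) (j₁ : Fin (n₁ + 1)),
      @RDisjoint _ dP ((k i.succ : ℕ) : ℝ)
        (⋃ t ∈ {t : ℕ+ | t ≤ h (k i.succ)}, BF i s₂ j₁ t) := by
    intro i s₂ j₁
    refine masterB dP hdist (hkk' i.succ i.succ) (hkK i.succ) {t : ℕ+ | t ≤ h (k i.succ)}
      (fun t => C₁ (Function.update (dbl l) i (t + t)) j₁)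
      (fun t => D₂ (Function.update (dbl l) i (t + t)) i s₂)
      (fun t => padOf (D₂ (Function.update (dbl l) i (t + t + 1)) i s₂))
      (⋃ v ∈ {v : ℕ+ | v ≤ cap}, D₂ (Function.update (dbl l) i v) i s₂)
      ?_ ?_ ?_ ?_ ?_ ?_
    · intro t hT
      exact Set.subset_biUnion_of_mem (u := fun v => D₂ (Function.update (dbl l) i v) i s₂)
        ((hcapt i t hT).1 : (t + t : ℕ+) ∈ {v : ℕ+ | v ≤ cap})
    · intro t hT
      exact Set.mem_biUnion ((hcapt i t hT).2 : (t + t + 1 : ℕ+) ∈ {v : ℕ+ | v ≤ cap})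
        (padBspec i s₂ _ (hcapt i t hT).2).1
    · exact (P₂l.2 i s₂).2.2
    · intro t hT t' hT' V hVt hVt' hVne
      by_cases htt : t = t'
      · rw [htt]
      · obtain ⟨x, hx⟩ := hVne
        exact absurd (⟨V, hVt', hx⟩ : x ∈ ⋃₀ D₂ (Function.update (dbl l) i (t' + t')) i s₂)
          (Set.disjoint_left.mp
            (TdB i s₂ (t + t) (t' + t') (hcapt i t hT).1 (hcapt i t' hT').1 (pnat_ne_a htt))
            ⟨V, hVt, hx⟩)
    · rintro t hT t' hT' V hVt hVP ⟨x, hx⟩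
      have hpadm := (padBspec i s₂ (t' + t' + 1) (hcapt i t' hT').2).1
      have hVP' : V = padOf (D₂ (Function.update (dbl l) i (t' + t' + 1)) i s₂) := hVP
      have hx' : x ∈ padOf (D₂ (Function.update (dbl l) i (t' + t' + 1)) i s₂) := by
        rw [← hVP']; exact hx
      exact absurd
        (⟨padOf (D₂ (Function.update (dbl l) i (t' + t' + 1)) i s₂), hpadm, hx'⟩ :
          x ∈ ⋃₀ D₂ (Function.update (dbl l) i (t' + t' + 1)) i s₂)
        (Set.disjoint_left.mp
          (TdB i s₂ (t + t) (t' + t' + 1) (hcapt i t hT).1 (hcapt i t' hT').2 (pnat_ne_b t t'))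
          ⟨V, hVt, hx⟩)
    · intro t hT
      exact rdisj_mono (hKk' 0)
        ((P₁ (Function.update (dbl l) i (t + t)) (upd_bound hb0 (hcapt i t hT).1)).1.2.2.1 j₁)
  have keyA_UB : ∀ (i : Fin m) (s₁ : Fin (F₁ i + 1)) w,
      @UnifBounded _ dP (famA (D₁ (dbl l) i s₁) (fam₂ (dbl l) w)
        (padOf (D₁ (Function.update (dbl l) i (l i + l i + 1)) i s₁))) := by
    intro i s₁ w
    refine unifBounded_union
      (mainFam_bounded dP hdist (P₁l.1.2.1 i s₁) (famUB _ hb0 w))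
      (padA_bounded dP hdist (padOf_bdd ?_))
    exact (P₁ (Function.update (dbl l) i (l i + l i + 1))
      (upd_bound hb0 (hcapt i (l i) (hl i)).2)).1.2.1 i s₁
  have keyB_UB : ∀ (i : Fin m) (s₂ : Fin (F₂ i + 1)) (j₁ : Fin (n₁ + 1)),
      @UnifBounded _ dP (famB (C₁ (dbl l) j₁) (D₂ (dbl l) i s₂)
        (padOf (D₂ (Function.update (dbl l) i (l i + l i + 1)) i s₂))) := by
    intro i s₂ j₁
    refine unifBounded_union
      (mainFam_bounded dP hdist (P₁l.1.1 j₁) (P₂l.1.2.1 i s₂))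
      (padB_bounded dP hdist (padOf_bdd ?_))
    exact (P₂ (Function.update (dbl l) i (l i + l i + 1))
      (upd_bound hb0 (hcapt i (l i) (hl i)).2)).1.2.1 i s₂
  have keyA_sub : ∀ (i : Fin m) (s₁ : Fin (F₁ i + 1)) w,
      famA (D₁ (dbl l) i s₁) (fam₂ (dbl l) w)
          (padOf (D₁ (Function.update (dbl l) i (l i + l i + 1)) i s₁)) ⊆
        ⋃ t ∈ {t : ℕ+ | t ≤ h (k i.succ)}, AF i s₁ w t := by
    intro i s₁ w S hS
    refine Set.mem_biUnion (hl i : l i ∈ {t : ℕ+ | t ≤ h (k i.succ)}) ?_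
    show S ∈ AF i s₁ w (l i)
    show S ∈ famA (D₁ (Function.update (dbl l) i (l i + l i)) i s₁)
      (fam₂ (Function.update (dbl l) i (l i + l i)) w)
      (padOf (D₁ (Function.update (dbl l) i (l i + l i + 1)) i s₁))
    rw [dbl_self_update l i]
    exact hS
  have keyB_sub : ∀ (i : Fin m) (s₂ : Fin (F₂ i + 1)) (j₁ : Fin (n₁ + 1)),
      famB (C₁ (dbl l) j₁) (D₂ (dbl l) i s₂)
          (padOf (D₂ (Function.update (dbl l) i (l i + l i + 1)) i s₂)) ⊆
        ⋃ t ∈ {t : ℕ+ | t ≤ h (k i.succ)}, BF i s₂ j₁ t := by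
    intro i s₂ j₁ S hS
    refine Set.mem_biUnion (hl i : l i ∈ {t : ℕ+ | t ≤ h (k i.succ)}) ?_
    show S ∈ BF i s₂ j₁ (l i)
    show S ∈ famB (C₁ (Function.update (dbl l) i (l i + l i)) j₁)
      (D₂ (Function.update (dbl l) i (l i + l i)) i s₂)
      (padOf (D₂ (Function.update (dbl l) i (l i + l i + 1)) i s₂))
    rw [dbl_self_update l i]
    exact hS
  refine ⟨⟨?_, ?_, ?_, ?_, ?_⟩, ?_⟩
  · intro j
    exact mainFam_bounded dP hdist (P₁l.1.1 _) (P₂l.1.1 _)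
  · intro i s
    rcases hsym : (e i).symm s with ⟨s₁, w⟩ | ⟨s₂, j₁⟩
    · simp only [hsym, Sum.elim_inl]
      exact keyA_UB i s₁ w
    · simp only [hsym, Sum.elim_inr]
      exact keyB_UB i s₂ j₁
  · intro j
    exact mainFam_rdisj dP hdist (hkk' 0 0) (hkk' 0 0) (P₁l.1.2.2.1 _) (P₂l.1.2.2.1 _)
  · intro i s
    rcases hsym : (e i).symm s with ⟨s₁, w⟩ | ⟨s₂, j₁⟩
    · simp only [hsym, Sum.elim_inl]
      exact rdisj_subset (keyA_sub i s₁ w) (keyA_RD i s₁ w)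
    · simp only [hsym, Sum.elim_inr]
      exact rdisj_subset (keyB_sub i s₂ j₁) (keyB_RD i s₂ j₁)
  · -- covering
    rw [Set.eq_univ_iff_forall]
    intro p
    have hx : p.1 ∈ (⋃ j, ⋃₀ C₁ (dbl l) j) ∪ (⋃ i, ⋃ s, ⋃₀ D₁ (dbl l) i s) := by
      rw [P₁l.1.2.2.2.2]; trivial
    have hy : p.2 ∈ (⋃ j, ⋃₀ C₂ (dbl l) j) ∪ (⋃ i, ⋃ s, ⋃₀ D₂ (dbl l) i s) := by
      rw [P₂l.1.2.2.2.2]; trivial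
    rcases hx with hx | hx
    · simp only [Set.mem_iUnion, Set.mem_sUnion] at hx
      obtain ⟨j₁, U, hU, hxU⟩ := hx
      rcases hy with hy | hy
      · simp only [Set.mem_iUnion, Set.mem_sUnion] at hy
        obtain ⟨j₂, V, hV, hyV⟩ := hy
        obtain ⟨j, hj⟩ := cdec_surj n₁ n₂ j₁ j₂
        refine Set.mem_union_left _ (Set.mem_iUnion.mpr ⟨j, ⟨U ×ˢ V, ⟨U, ?_, V, ?_, rfl⟩,
          hxU, hyV⟩⟩)
        · rw [hj]; exact hU
        · rw [hj]; exact hV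
      · simp only [Set.mem_iUnion, Set.mem_sUnion] at hy
        obtain ⟨i, s₂, V, hV, hyV⟩ := hy
        refine Set.mem_union_right _ (Set.mem_iUnion.mpr ⟨i, Set.mem_iUnion.mpr
          ⟨e i (Sum.inr (s₂, j₁)), ⟨U ×ˢ V, ?_, hxU, hyV⟩⟩⟩)
        simp only [Equiv.symm_apply_apply, Sum.elim_inl, Sum.elim_inr]
        exact Or.inl ⟨U, hU, V, hV, rfl⟩
    · simp only [Set.mem_iUnion, Set.mem_sUnion] at hx
      obtain ⟨i, s₁, U, hU, hxU⟩ := hx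
      have hw : ∃ w, ∃ V ∈ fam₂ (dbl l) w, p.2 ∈ V := by
        rcases hy with hy | hy
        · simp only [Set.mem_iUnion, Set.mem_sUnion] at hy
          obtain ⟨j₂, V, hV, hyV⟩ := hy
          exact ⟨Sum.inl j₂, V, hV, hyV⟩
        · simp only [Set.mem_iUnion, Set.mem_sUnion] at hy
          obtain ⟨i', s₂, V, hV, hyV⟩ := hy
          exact ⟨Sum.inr ⟨i', s₂⟩, V, hV, hyV⟩
      obtain ⟨w, V, hV, hyV⟩ := hw
      refine Set.mem_union_right _ (Set.mem_iUnion.mpr ⟨i, Set.mem_iUnion.mpr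
        ⟨e i (Sum.inl (s₁, w)), ⟨U ×ˢ V, ?_, hxU, hyV⟩⟩⟩)
      simp only [Equiv.symm_apply_apply, Sum.elim_inl, Sum.elim_inr]
      exact Or.inl ⟨U, hU, V, hV, rfl⟩
  · -- translation conditions
    intro i s
    rcases hsym : (e i).symm s with ⟨s₁, w⟩ | ⟨s₂, j₁⟩
    · simp only [hsym, Sum.elim_inl, dbl_update, Function.update_self, Function.update_idem]
      exact ⟨fun t ht => keyA_NE i s₁ w t ht,
        fun t t' ht ht' htt => keyA_DJ i s₁ w t t' ht ht' htt,
        keyA_RD i s₁ w⟩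
    · simp only [hsym, Sum.elim_inr, dbl_update, Function.update_self, Function.update_idem]
      exact ⟨fun t ht => keyB_NE i s₂ j₁ t ht,
        fun t t' ht ht' htt => keyB_DJ i s₂ j₁ t t' ht ht' htt,
        keyB_RD i s₂ j₁⟩
end

section
/- For every n ∈ ℕ+, the group ℤ^n equipped with the metric d(x,y) = Σ_{i=1}^n |x_i − y_i| has the (1,0)-DTUT property. -/
open Metric Set Function

open APC Set

namespace ZnAux

open APC Set

lemma sep_aux {K a a' L z w : ℤ} (h : K + L ≤ |a - a'|)
    (hz1 : a ≤ z) (hz2 : z < a + L) (hw1 : a' ≤ w) (hw2 : w < a' + L) :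
    K ≤ |z - w| := by
  rcases abs_cases (a - a') with ⟨h1, _⟩ | ⟨h1, _⟩ <;> rw [h1] at h <;>
    rcases abs_cases (z - w) with ⟨g1, _⟩ | ⟨g1, _⟩ <;> rw [g1] <;> omega

/-- start of the 1-d interval of class `c` for translation parameter `T` and index `j`. -/
def stf (B K : ℤ) (c : Fin 3) (T j : ℤ) : ℤ :=
  B * j + 2 * K * T - (if c = 0 then 2 * K else if c = 1 then K else 0)

/-- length of the 1-d interval of class `c`. -/
def lenf (B K : ℤ) (c : Fin 3) : ℤ := if c = 2 then B - 2 * K else K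

def cellZ (B K : ℤ) (c : Fin 3) (T j : ℤ) : Set ℤ :=
  Set.Ico (stf B K c T j) (stf B K c T j + lenf B K c)

lemma classify (B K T : ℤ) (hK : 1 ≤ K) (hB : 4 * K ≤ B) (z : ℤ) :
    ∃ c j, z ∈ cellZ B K c T j := by
  have hB0 : (0:ℤ) < B := by linarith
  set w := z - 2 * K * T + 2 * K with hw
  have hdm : B * (w / B) + w % B = w := Int.mul_ediv_add_emod w B
  have h0 : 0 ≤ w % B := Int.emod_nonneg w (by omega)
  have h1 : w % B < B := Int.emod_lt_of_pos w hB0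
  by_cases hc0 : w % B < K
  · refine ⟨0, w / B, ?_, ?_⟩ <;> (simp only [stf, lenf, Fin.ext_iff]; norm_num; linarith)
  · by_cases hc1 : w % B < 2 * K
    · refine ⟨1, w / B, ?_, ?_⟩ <;> (simp only [stf, lenf, Fin.ext_iff]; norm_num; linarith)
    · refine ⟨2, w / B, ?_, ?_⟩ <;> (simp only [stf, lenf, Fin.ext_iff]; norm_num; linarith)

lemma cell_bdd {B K : ℤ} (hK : 1 ≤ K) (hB : 4 * K ≤ B) {c : Fin 3} {T j z w : ℤ}
    (hz : z ∈ cellZ B K c T j) (hw : w ∈ cellZ B K c T j) : |z - w| ≤ B := by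
  simp only [cellZ, Set.mem_Ico] at hz hw
  have hl : lenf B K c ≤ B := by unfold lenf; split_ifs <;> linarith
  rcases abs_cases (z - w) with ⟨g, _⟩ | ⟨g, _⟩ <;> rw [g] <;> linarith [hz.1, hz.2, hw.1, hw.2]

lemma sep_cell {B K Nn : ℤ} (hK : 1 ≤ K) (hNn : 1 ≤ Nn) (hB : B = 2 * K * (Nn + 1))
    {c : Fin 3} {T T' j j' z w : ℤ}
    (hT : 1 ≤ T) (hT' : 1 ≤ T') (hTN : T ≤ Nn) (hT'N : T' ≤ Nn)
    (hcase : (T = T' ∧ j ≠ j') ∨ (T ≠ T' ∧ c ≠ 2))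
    (hz : z ∈ cellZ B K c T j) (hw : w ∈ cellZ B K c T' j') :
    K ≤ |z - w| := by
  simp only [cellZ, Set.mem_Ico] at hz hw
  refine sep_aux ?_ hz.1 hz.2 hw.1 hw.2
  have hdiff : stf B K c T j - stf B K c T' j' = 2 * K * ((Nn + 1) * (j - j') + (T - T')) := by
    simp only [stf, hB]; ring
  set m := (Nn + 1) * (j - j') + (T - T') with hmdef
  have habs : |stf B K c T j - stf B K c T' j'| = 2 * K * |m| := by
    rw [hdiff, abs_mul, abs_of_nonneg (by linarith : (0:ℤ) ≤ 2 * K)]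
  rcases hcase with ⟨hTT, hjj⟩ | ⟨hTT, hc2⟩
  · have h1 : 1 ≤ |j - j'| := Int.one_le_abs (sub_ne_zero.mpr hjj)
    have hmeq : m = (Nn + 1) * (j - j') := by rw [hmdef, hTT]; ring
    have hNm : Nn + 1 ≤ |m| := by
      rw [hmeq, abs_mul, abs_of_pos (by linarith : (0:ℤ) < Nn + 1)]; nlinarith
    rw [habs]
    unfold lenf; split_ifs <;> nlinarith
  · have hm1 : 1 ≤ |m| := by
      rcases eq_or_ne j j' with h | h
      · have hmeq : m = T - T' := by rw [hmdef, h]; ring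
        rw [hmeq]; exact Int.one_le_abs (sub_ne_zero.mpr hTT)
      · have h1 : 1 ≤ |j - j'| := Int.one_le_abs (sub_ne_zero.mpr h)
        have hA : Nn + 1 ≤ |(Nn + 1) * (j - j')| := by
          rw [abs_mul, abs_of_pos (by linarith : (0:ℤ) < Nn + 1)]; nlinarith
        have hT2 : |T - T'| ≤ Nn - 1 := abs_le.mpr ⟨by linarith, by linarith⟩
        have hAm : |(Nn + 1) * (j - j')| ≤ |m| + |T - T'| := by
          have he : (Nn + 1) * (j - j') = m + (T' - T) := by rw [hmdef]; ring
          rw [he]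
          calc |m + (T' - T)| ≤ |m| + |T' - T| := abs_add_le _ _
            _ = |m| + |T - T'| := by rw [abs_sub_comm]
        linarith
    rw [habs]
    have hlen : lenf B K c = K := by unfold lenf; rw [if_neg hc2]
    rw [hlen]; nlinarith

lemma cell_ne {B K Nn : ℤ} (hK : 1 ≤ K) (hNn : 1 ≤ Nn) (hB : B = 2 * K * (Nn + 1))
    (c : Fin 3) (T j : ℤ) : stf B K c T j ∈ cellZ B K c T j := by
  simp only [cellZ, Set.mem_Ico]
  refine ⟨le_refl _, ?_⟩
  unfold lenf; split_ifs <;> nlinarith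

def cellP (n : ℕ) (B K : ℤ) (σ : Fin n → Fin 3) (T : ℤ) (j : Fin n → ℤ) :
    Set (Fin n → ℤ) :=
  {x | ∀ i, x i ∈ cellZ B K (σ i) T (j i)}

def fam (n : ℕ) (B K : ℤ) (σ : Fin n → Fin 3) (T : ℤ) : Set (Set (Fin n → ℤ)) :=
  {U | ∃ j, U = cellP n B K σ T j}

end ZnAux

namespace ZnAux

open APC Set

lemma main (n : ℕ) (hn : 0 < n) [dZ : MetricSpace (Fin n → ℤ)]
    (hdist : ∀ x y : Fin n → ℤ,
      @dist _ dZ.toPseudoMetricSpace.toDist x y = ∑ i, |((x i : ℝ) - (y i : ℝ))|) :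
    DTUT (Fin n → ℤ) 1 0 := by
  classical
  refine ⟨fun _ => 3 ^ n - 1, fun h k hk => ?_⟩
  have hsucc : (0 : Fin 1).succ = 1 := rfl
  set N : ℕ+ := h (k 1) with hN
  set K : ℤ := ((k 1 : ℕ) : ℤ) with hKdef
  set Nn : ℤ := ((N : ℕ) : ℤ) with hNndef
  set B : ℤ := 2 * K * (Nn + 1) with hBdef
  have hK : 1 ≤ K := by rw [hKdef]; exact_mod_cast (k 1).one_le
  have hNn1 : 1 ≤ Nn := by rw [hNndef]; exact_mod_cast N.one_le
  have hB4 : 4 * K ≤ B := by rw [hBdef]; nlinarith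
  have hpow : 3 ^ n - 1 + 1 = 3 ^ n := Nat.succ_pred_eq_of_pos (pow_pos (by norm_num) n)
  set E : (Fin n → Fin 3) ≃ Fin (3 ^ n) := finFunctionFinEquiv with hE
  set patch : (Fin n → Fin 3) → (Fin n → Fin 3) :=
    fun σ => if σ = (fun _ => 2) then (fun _ => 0) else σ with hpatch
  set σof : Fin (3 ^ n - 1 + 1) → (Fin n → Fin 3) :=
    fun s => patch (E.symm (Fin.cast hpow s)) with hσof
  have hpatch_ne : ∀ σ, patch σ ≠ fun _ => 2 := by
    intro σ hσ
    by_cases hc : σ = fun _ => 2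
    · rw [hpatch] at hσ; simp only [if_pos hc] at hσ
      have h2 := congrFun hσ ⟨0, hn⟩
      exact absurd h2 (by decide)
    · rw [hpatch] at hσ; simp only [if_neg hc] at hσ; exact hc hσ
  have hσof_ne : ∀ s, σof s ≠ fun _ => 2 := fun s => hpatch_ne _
  have hσof_surj : ∀ σ : Fin n → Fin 3, σ ≠ (fun _ => 2) → ∃ s, σof s = σ := by
    intro σ hσ
    refine ⟨Fin.cast hpow.symm (E σ), ?_⟩
    have hcc : Fin.cast hpow (Fin.cast hpow.symm (E σ)) = E σ := by
      apply Fin.ext; simp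
    rw [hσof]; simp only [hcc, Equiv.symm_apply_apply, hpatch, if_neg hσ]
  have hrange : ∀ t : ℕ+, t ≤ N → 1 ≤ ((t : ℕ) : ℤ) ∧ ((t : ℕ) : ℤ) ≤ Nn := by
    intro t ht
    refine ⟨by exact_mod_cast t.one_le, ?_⟩
    rw [hNndef]; exact_mod_cast (show (t : ℕ) ≤ (N : ℕ) from ht)
  have hbdd : ∀ (σ : Fin n → Fin 3) (T : ℤ), @UnifBounded _ dZ (fam n B K σ T) := by
    intro σ T
    refine ⟨(n : ℝ) * (B : ℝ),
      mul_pos (by exact_mod_cast hn) (by exact_mod_cast (by linarith : (0:ℤ) < B)), ?_⟩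
    rintro U ⟨j, rfl⟩ x hx y hy
    rw [hdist]
    have hcb : ∀ i ∈ Finset.univ, |((x i : ℝ) - (y i : ℝ))| ≤ (B : ℝ) := by
      intro i _
      have h1 : |x i - y i| ≤ B := cell_bdd hK hB4 (hx i) (hy i)
      have h2 : |((x i : ℝ) - (y i : ℝ))| = ((|x i - y i| : ℤ) : ℝ) := by
        push_cast; ring_nf
      rw [h2]; exact_mod_cast h1
    calc ∑ i, |((x i : ℝ) - (y i : ℝ))| ≤ ∑ _i : Fin n, (B : ℝ) := Finset.sum_le_sum hcb
      _ = (n : ℝ) * (B : ℝ) := by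
        rw [Finset.sum_const, Finset.card_univ, Fintype.card_fin, nsmul_eq_mul]
  have hsepP : ∀ (σ : Fin n → Fin 3) (T T' : ℤ) (j j' : Fin n → ℤ) (x y : Fin n → ℤ),
      1 ≤ T → T ≤ Nn → 1 ≤ T' → T' ≤ Nn →
      ((T = T' ∧ j ≠ j') ∨ (T ≠ T' ∧ σ ≠ fun _ => 2)) →
      x ∈ cellP n B K σ T j → y ∈ cellP n B K σ T' j' →
      (K : ℝ) ≤ @dist _ dZ.toPseudoMetricSpace.toDist x y := by
    intro σ T T' j j' x y h1 h2 h3 h4 hcase hx hy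
    have key : ∃ i0 : Fin n, K ≤ |x i0 - y i0| := by
      rcases hcase with ⟨hTT, hjj⟩ | ⟨hTT, hσ⟩
      · obtain ⟨i0, hi0⟩ := Function.ne_iff.mp hjj
        exact ⟨i0, sep_cell hK hNn1 hBdef h1 h3 h2 h4 (Or.inl ⟨hTT, hi0⟩) (hx i0) (hy i0)⟩
      · obtain ⟨i0, hi0⟩ := Function.ne_iff.mp hσ
        exact ⟨i0, sep_cell hK hNn1 hBdef h1 h3 h2 h4 (Or.inr ⟨hTT, hi0⟩) (hx i0) (hy i0)⟩
    obtain ⟨i0, hi0⟩ := key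
    have h5 : (K : ℝ) ≤ |((x i0 : ℝ) - (y i0 : ℝ))| := by
      have h6 : (K : ℝ) ≤ ((|x i0 - y i0| : ℤ) : ℝ) := by exact_mod_cast hi0
      have h7 : ((|x i0 - y i0| : ℤ) : ℝ) = |((x i0 : ℝ) - (y i0 : ℝ))| := by
        push_cast; ring_nf
      rwa [h7] at h6
    refine le_trans h5 ?_
    rw [hdist]
    exact Finset.single_le_sum (f := fun i => |((x i : ℝ) - (y i : ℝ))|)
      (fun i _ => abs_nonneg _) (Finset.mem_univ i0)
  refine ⟨fun l _ => fam n B K (fun _ => 2) ((l 0 : ℕ) : ℤ),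
    fun l i s => fam n B K (σof s) ((l 0 : ℕ) : ℤ), ?_⟩
  intro l hl
  have hl0 : l 0 ≤ N := by have h0 := hl 0; rwa [hsucc] at h0
  have hT0 := hrange (l 0) hl0
  have hk01 : ((k 0 : ℕ) : ℝ) ≤ (K : ℝ) := by
    have h1 : (k 0 : ℕ) ≤ (k 1 : ℕ) := by
      exact_mod_cast le_of_lt (hk (by decide : (0 : Fin 2) < 1))
    rw [hKdef]; exact_mod_cast h1
  have hk1K : ((k 1 : ℕ) : ℝ) = (K : ℝ) := by rw [hKdef]; push_cast; ring
  constructor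
  · refine ⟨fun j => hbdd _ _, fun i s => hbdd _ _, ?_, ?_, ?_⟩
    · rintro j U ⟨jv, rfl⟩ V ⟨jv', rfl⟩ hUV x hx y hy
      have hjj : jv ≠ jv' := by rintro rfl; exact hUV rfl
      exact le_trans hk01
        (hsepP _ _ _ _ _ x y hT0.1 hT0.2 hT0.1 hT0.2 (Or.inl ⟨rfl, hjj⟩) hx hy)
    · intro i s
      have hi : i = 0 := Subsingleton.elim i 0
      subst hi
      rintro U ⟨jv, rfl⟩ V ⟨jv', rfl⟩ hUV x hx y hy
      have hjj : jv ≠ jv' := by rintro rfl; exact hUV rfl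
      rw [hsucc, hk1K]
      exact hsepP _ _ _ _ _ x y hT0.1 hT0.2 hT0.1 hT0.2 (Or.inl ⟨rfl, hjj⟩) hx hy
    · apply Set.eq_univ_of_forall
      intro x
      obtain ⟨c, j, hcj⟩ : ∃ (c : Fin n → Fin 3) (j : Fin n → ℤ),
          ∀ i, x i ∈ cellZ B K (c i) ((l 0 : ℕ) : ℤ) (j i) := by
        choose c j hcj using fun i => classify B K ((l 0 : ℕ) : ℤ) hK hB4 (x i)
        exact ⟨c, j, hcj⟩
      by_cases hc : c = fun _ => 2
      · subst hc
        exact Set.mem_union_left _ (Set.mem_iUnion.mpr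
          ⟨0, ⟨cellP n B K (fun _ => 2) ((l 0 : ℕ) : ℤ) j, ⟨j, rfl⟩, fun i => hcj i⟩⟩)
      · obtain ⟨s, hs⟩ := hσof_surj c hc
        refine Set.mem_union_right _ (Set.mem_iUnion.mpr ⟨0, Set.mem_iUnion.mpr ⟨s, ?_⟩⟩)
        exact ⟨cellP n B K (σof s) ((l 0 : ℕ) : ℤ) j, ⟨j, rfl⟩,
          by rw [hs]; exact fun i => hcj i⟩
  · intro i s
    have hi : i = 0 := Subsingleton.elim i 0
    subst hi
    refine ⟨?_, ?_, ?_⟩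
    · intro t ht
      refine ⟨fun i => stf B K (σof s i) ((t : ℕ) : ℤ) 0,
        ⟨cellP n B K (σof s) (((Function.update l 0 t 0 : ℕ+) : ℕ) : ℤ) (fun _ => 0),
          ⟨fun _ => 0, rfl⟩, ?_⟩⟩
      intro i
      simp only [Function.update_self]
      exact cell_ne hK hNn1 hBdef (σof s i) _ 0
    · intro t t' ht ht' htt'
      rw [Set.disjoint_left]
      rintro x ⟨U, ⟨j, rfl⟩, hxU⟩ ⟨U', ⟨j', rfl⟩, hxU'⟩
      simp only [Function.update_self] at hxU hxU'
      have hTT : ((t : ℕ) : ℤ) ≠ ((t' : ℕ) : ℤ) := by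
        have h1 : (t : ℕ) ≠ (t' : ℕ) := fun hh => htt' (PNat.coe_injective hh)
        exact_mod_cast h1
      have hd := hsepP (σof s) _ _ j j' x x (hrange t ht).1 (hrange t ht).2
        (hrange t' ht').1 (hrange t' ht').2 (Or.inr ⟨hTT, hσof_ne s⟩) hxU hxU'
      rw [hdist] at hd
      simp only [sub_self, abs_zero, Finset.sum_const_zero] at hd
      have hK1 : (1 : ℝ) ≤ (K : ℝ) := by exact_mod_cast hK
      linarith
    · intro U hU V hV hUV x hx y hy
      simp only [Set.mem_iUnion, Set.mem_setOf_eq, fam] at hU hV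
      obtain ⟨t, ht, jU, rfl⟩ := hU
      obtain ⟨t', ht', jV, rfl⟩ := hV
      simp only [Function.update_self] at hx hy hUV
      rw [hsucc, hk1K]
      by_cases hTT : ((t : ℕ) : ℤ) = ((t' : ℕ) : ℤ)
      · have hjj : jU ≠ jV := by
          rintro rfl
          exact hUV (by rw [hTT])
        exact hsepP (σof s) _ _ jU jV x y (hrange t ht).1 (hrange t ht).2
          (hrange t' ht').1 (hrange t' ht').2 (Or.inl ⟨hTT, hjj⟩) hx hy
      · exact hsepP (σof s) _ _ jU jV x y (hrange t ht).1 (hrange t ht).2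
          (hrange t' ht').1 (hrange t' ht').2 (Or.inr ⟨hTT, hσof_ne s⟩) hx hy

end ZnAux



/-- For every `n ≥ 1`, the group `ℤⁿ` with the `ℓ¹` metric
`d(x,y) = Σ |xᵢ - yᵢ|` has the `(1,0)`-DTUT property. -/
theorem zn_dtut (n : ℕ) (hn : 0 < n) (dZ : MetricSpace (Fin n → ℤ))
    (hdist : ∀ x y : Fin n → ℤ,
      @dist _ dZ.toPseudoMetricSpace.toDist x y = ∑ i, |((x i : ℝ) - (y i : ℝ))|) :
    @DTUT (Fin n → ℤ) dZ 1 0 :=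
  ZnAux.main n hn hdist
end
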